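/- arXiv:math/0111191 — 4 statements merged into one kernel-verified Lean document; each statement's English description precedes it below -/
import Mathlib

section
/- Let t be an odd prime power and N ≥ 1. Let q₁ and q₂ be quadratic hermitian forms on E = F_{t²}^N with polar hermitian forms φ₁ and φ₂. Then q₁ and q₂ are equivalent — i.e. there exists an F_{t²}-linear automorphism u of E with q₂(x) = q₁(u(x)) for all x ∈ E — if and only if φ₁ and φ₂ have the same rank. -/
open Module

/-- `H` is a sesquilinear hermitian form on `F_{t²}^N` (conjugation is `x ↦ x^t`). -/
def IsSesquiHermitian {K : Type} [Field K] {N : ℕ} (t : ℕ)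
    (H : (Fin N → K) → (Fin N → K) → K) : Prop :=
  (∀ x x' y, H (x + x') y = H x y + H x' y) ∧
  (∀ x y y', H x (y + y') = H x y + H x y') ∧
  (∀ (c : K) (x y : Fin N → K), H (c • x) y = c ^ t * H x y) ∧
  (∀ (c : K) (x y : Fin N → K), H x (c • y) = c * H x y) ∧
  (∀ x y, H x y = H y x ^ t)

/-- The kernel `{x : ∀ y, H x y = 0}` of a sesquilinear hermitian form, as a
`F_{t²}`-subspace. -/
def hermKer {K : Type} [Field K] {N : ℕ} (t : ℕ)
    (H : (Fin N → K) → (Fin N → K) → K) (hH : IsSesquiHermitian t H) :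
    Submodule K (Fin N → K) where
  carrier := {x | ∀ y, H x y = 0}
  add_mem' := by
    intro a b ha hb y
    rw [hH.1 a b y, ha y, hb y, add_zero]
  zero_mem' := by
    intro y
    have h := hH.1 0 0 y
    rw [add_zero] at h
    exact (left_eq_add.mp h)
  smul_mem' := by
    intro c x hx y
    rw [hH.2.2.1 c x y, hx y, mul_zero]

section Basic
variable {K : Type} [Field K] {t N : ℕ} {H : (Fin N → K) → (Fin N → K) → K}

lemma herm_zero_left (hH : IsSesquiHermitian t H) (y : Fin N → K) : H 0 y = 0 := by
  have h := hH.1 0 0 y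
  rw [add_zero] at h
  exact (left_eq_add.mp h)

lemma herm_zero_right (hH : IsSesquiHermitian t H) (x : Fin N → K) : H x 0 = 0 := by
  have h := hH.2.1 x 0 0
  rw [add_zero] at h
  exact (left_eq_add.mp h)

lemma herm_sum_left (hH : IsSesquiHermitian t H) {ι : Type} (s : Finset ι)
    (f : ι → (Fin N → K)) (y : Fin N → K) :
    H (∑ i ∈ s, f i) y = ∑ i ∈ s, H (f i) y := by
  induction s using Finset.cons_induction with
  | empty => simpa using herm_zero_left hH y
  | cons a s ha ih => rw [Finset.sum_cons, hH.1, ih, Finset.sum_cons]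

lemma herm_sum_right (hH : IsSesquiHermitian t H) {ι : Type} (s : Finset ι)
    (f : ι → (Fin N → K)) (x : Fin N → K) :
    H x (∑ i ∈ s, f i) = ∑ i ∈ s, H x (f i) := by
  induction s using Finset.cons_induction with
  | empty => simpa using herm_zero_right hH x
  | cons a s ha ih => rw [Finset.sum_cons, hH.2.1, ih, Finset.sum_cons]

lemma herm_expand (hH : IsSesquiHermitian t H) {ι : Type} [Fintype ι]
    (r s : ι → K) (v w : ι → (Fin N → K)) :
    H (∑ i, r i • v i) (∑ j, s j • w j)
      = ∑ i, ∑ j, (r i) ^ t * (s j * H (v i) (w j)) := by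
  rw [herm_sum_left hH]
  refine Finset.sum_congr rfl fun i _ => ?_
  rw [herm_sum_right hH]
  refine Finset.sum_congr rfl fun j _ => ?_
  rw [hH.2.2.1, hH.2.2.2.1]

lemma herm_repr (hH : IsSesquiHermitian t H) (b : Basis (Fin N) K (Fin N → K))
    (x y : Fin N → K) :
    H x y = ∑ i, ∑ j, (b.repr x i) ^ t * (b.repr y j * H (b i) (b j)) := by
  conv_lhs => rw [← b.sum_repr x, ← b.sum_repr y]
  exact herm_expand hH _ _ _ _

/-- Polarization: two hermitian forms with the same diagonal are equal. -/
lemma herm_ext {H' : (Fin N → K) → (Fin N → K) → K}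
    (hH : IsSesquiHermitian t H) (hH' : IsSesquiHermitian t H')
    (h2 : (2 : K) ≠ 0) (lam : K) (hl0 : lam ≠ 0) (hlt : lam ^ t = -lam)
    (hd : ∀ x, H x x = H' x x) (x y : Fin N → K) : H x y = H' x y := by
  have hA : H x y + H y x = H' x y + H' y x := by
    have h := hd (x + y)
    rw [hH.1, hH.2.1, hH.2.1, hH'.1, hH'.2.1, hH'.2.1] at h
    have hx := hd x; have hy := hd y
    linear_combination h - hx - hy
  have hB : lam * (H x y - H y x) = lam * (H' x y - H' y x) := by
    have h := hd (x + lam • y)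
    simp only [hH.1, hH.2.1, hH.2.2.1, hH.2.2.2.1, hH'.1, hH'.2.1, hH'.2.2.1,
      hH'.2.2.2.1, hlt] at h
    have hx := hd x; have hy := hd y
    linear_combination h - hx + lam * lam * hy
  have hC : H x y - H y x = H' x y - H' y x := mul_left_cancel₀ hl0 hB
  have h2' : 2 * H x y = 2 * H' x y := by linear_combination hA + hC
  exact mul_left_cancel₀ h2 h2'

/-- Every hermitian form admits an orthogonal basis with diagonal entries 0 or 1. -/
lemma herm_diag (ht0 : t ≠ 0) (h2 : (2 : K) ≠ 0) (lam : K) (hl0 : lam ≠ 0)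
    (hlt : lam ^ t = -lam)
    (hnorm : ∀ a : K, a ≠ 0 → a ^ t = a → ∃ c : K, c ^ (t + 1) = a) :
    ∀ (N : ℕ) (H : (Fin N → K) → (Fin N → K) → K), IsSesquiHermitian t H →
      ∃ (b : Basis (Fin N) K (Fin N → K)) (d : Fin N → K),
        (∀ i, d i = 0 ∨ d i = 1) ∧ ∀ i j, H (b i) (b j) = if i = j then d i else 0 := by
  intro N
  induction N with
  | zero =>
    intro H hH
    exact ⟨Pi.basisFun K (Fin 0), 0, fun i => i.elim0, fun i => i.elim0⟩
  | succ n ih =>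
    intro H hH
    by_cases hq : ∀ x, H x x = 0
    · -- H is identically zero
      have hzero : ∀ x y, H x y = 0 := by
        have hz : IsSesquiHermitian t (fun (_ _ : Fin (n+1) → K) => (0 : K)) := by
          refine ⟨fun _ _ _ => by simp, fun _ _ _ => by simp, fun _ _ _ => by simp,
            fun _ _ _ => by simp, fun _ _ => by simp [zero_pow ht0]⟩
        exact herm_ext hH hz h2 lam hl0 hlt hq
      refine ⟨Pi.basisFun K (Fin (n+1)), 0, fun i => Or.inl rfl, fun i j => by
        simp [hzero]⟩
    · push_neg at hq
      obtain ⟨v, hv⟩ := hq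
      -- normalize v so that H v v = 1
      have hvt : (H v v)⁻¹ ^ t = (H v v)⁻¹ := by
        rw [inv_pow]
        exact congrArg Inv.inv (hH.2.2.2.2 v v).symm
      obtain ⟨c, hc⟩ := hnorm (H v v)⁻¹ (inv_ne_zero hv) hvt
      have hc0 : c ≠ 0 := by
        intro h; rw [h, zero_pow (by omega)] at hc
        exact inv_ne_zero hv hc.symm
      set v' : Fin (n+1) → K := c • v with hv'
      have hv'1 : H v' v' = 1 := by
        rw [hv', hH.2.2.1, hH.2.2.2.1, ← mul_assoc, ← pow_succ]
        rw [hc]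
        exact inv_mul_cancel₀ hv
      -- the orthogonal complement of v'
      set f : (Fin (n+1) → K) →ₗ[K] K :=
        { toFun := fun x => H v' x
          map_add' := fun x y => hH.2.1 v' x y
          map_smul' := fun c x => hH.2.2.2.1 c v' x } with hf
      have hfv' : f v' = 1 := hv'1
      have hfsurj : Function.Surjective f := by
        intro a
        exact ⟨a • v', by rw [map_smul, hfv', smul_eq_mul, mul_one]⟩
      set W := LinearMap.ker f with hW
      have hWfr : finrank K W = n := by
        have h1 := LinearMap.finrank_range_add_finrank_ker f
        rw [LinearMap.range_eq_top.mpr hfsurj, finrank_top, finrank_self] at h1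
        have h2' : finrank K (Fin (n+1) → K) = n + 1 := by simp
        rw [h2'] at h1
        rw [hW]
        omega
      set w : Basis (Fin n) K W := finBasisOfFinrankEq K W hWfr with hwdef
      -- restricted form on coordinates
      set H' : (Fin n → K) → (Fin n → K) → K :=
        fun x y => H (W.subtype (∑ i, x i • w i)) (W.subtype (∑ j, y j • w j)) with hH'def
      have hsum_add : ∀ x x' : Fin n → K,
          (W.subtype (∑ i, (x + x') i • w i)) =
            W.subtype (∑ i, x i • w i) + W.subtype (∑ i, x' i • w i) := by
        intro x x'
        rw [← map_add, ← Finset.sum_add_distrib]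
        congr 1
        exact Finset.sum_congr rfl fun i _ => by rw [Pi.add_apply, add_smul]
      have hsum_smul : ∀ (a : K) (x : Fin n → K),
          (W.subtype (∑ i, (a • x) i • w i)) = a • W.subtype (∑ i, x i • w i) := by
        intro a x
        rw [← map_smul, Finset.smul_sum]
        congr 1
        exact Finset.sum_congr rfl fun i _ => by rw [Pi.smul_apply, smul_eq_mul, mul_smul]
      have hH' : IsSesquiHermitian t H' := by
        refine ⟨fun x x' y => ?_, fun x y y' => ?_, fun a x y => ?_, fun a x y => ?_,
          fun x y => hH.2.2.2.2 _ _⟩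
        · rw [hH'def]; dsimp only; rw [hsum_add, hH.1]
        · rw [hH'def]; dsimp only; rw [hsum_add, hH.2.1]
        · rw [hH'def]; dsimp only; rw [hsum_smul, hH.2.2.1]
        · rw [hH'def]; dsimp only; rw [hsum_smul, hH.2.2.2.1]
      obtain ⟨b', d', hd'01, hgram'⟩ := ih H' hH'
      -- build the new basis of K^(n+1)
      set G : Fin n → W := fun i => ∑ j, b' i j • w j with hG
      set g : Fin n → (Fin (n+1) → K) := fun i => W.subtype (G i) with hg
      have hGli : LinearIndependent K G := by
        have : G = ⇑(w.equivFun.symm.toLinearMap) ∘ (fun i => b' i) := by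
          funext i
          simp [hG, Basis.equivFun_symm_apply]
        rw [this]
        exact b'.linearIndependent.map' _ (LinearMap.ker_eq_bot.mpr w.equivFun.symm.injective)
      have hgli : LinearIndependent K g := by
        have : g = ⇑W.subtype ∘ G := rfl
        rw [this]
        exact hGli.map' _ (Submodule.ker_subtype W)
      have hgW : ∀ i, g i ∈ W := fun i => (G i).2
      have hv'notin : v' ∉ Submodule.span K (Set.range g) := by
        intro hmem
        have hle : Submodule.span K (Set.range g) ≤ W := by
          rw [Submodule.span_le]
          rintro _ ⟨i, rfl⟩
          exact hgW i
        have : f v' = 0 := hle hmem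
        rw [hfv'] at this
        exact one_ne_zero this
      have hli : LinearIndependent K (Fin.cons v' g : Fin (n+1) → (Fin (n+1) → K)) :=
        hgli.fin_cons hv'notin
      have hcard : Fintype.card (Fin (n+1)) = finrank K (Fin (n+1) → K) := by simp
      set b : Basis (Fin (n+1)) K (Fin (n+1) → K) :=
        basisOfLinearIndependentOfCardEqFinrank hli hcard with hb
      have hbeq : ∀ i, b i = (Fin.cons v' g : Fin (n+1) → (Fin (n+1) → K)) i := fun i => by
        rw [hb, coe_basisOfLinearIndependentOfCardEqFinrank]
      -- gram matrix entries
      have hfg : ∀ i, H v' (g i) = 0 := fun i => hgW i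
      have hgf : ∀ i, H (g i) v' = 0 := fun i => by
        rw [hH.2.2.2.2, hfg i, zero_pow ht0]
      have hgg : ∀ i j, H (g i) (g j) = if i = j then d' i else 0 := by
        intro i j
        have : H (g i) (g j) = H' (b' i) (b' j) := rfl
        rw [this, hgram' i j]
      refine ⟨b, Fin.cons 1 d', ?_, ?_⟩
      · intro i
        refine Fin.cases ?_ ?_ i
        · exact Or.inr rfl
        · intro i'; exact hd'01 i'
      · intro i j
        rw [hbeq i, hbeq j]
        refine Fin.cases ?_ ?_ i
        · refine Fin.cases ?_ ?_ j
          · simpa using hv'1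
          · intro j'
            simp [Fin.cons_succ, Fin.cons_zero, hfg j', (Fin.succ_ne_zero j').symm]
        · intro i'
          refine Fin.cases ?_ ?_ j
          · simp [Fin.cons_succ, Fin.cons_zero, hgf i', Fin.succ_ne_zero i']
          · intro j'
            simp only [Fin.cons_succ, hgg i' j', Fin.succ_inj]

section Rank
variable {K : Type} [Field K] {t N : ℕ} {H : (Fin N → K) → (Fin N → K) → K}

open scoped Classical in
lemma herm_ker_finrank (ht0 : t ≠ 0) (hH : IsSesquiHermitian t H)
    (b : Basis (Fin N) K (Fin N → K)) (d : Fin N → K)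
    (hgram : ∀ i j, H (b i) (b j) = if i = j then d i else 0) :
    finrank K (hermKer t H hH) = (Finset.univ.filter (fun i => d i = 0)).card := by
  classical
  set s : Finset (Fin N) := Finset.univ.filter (fun i => d i = 0) with hs
  have hmem : ∀ i, i ∈ s ↔ d i = 0 := by
    intro i; simp [hs]
  -- H x (b i) = (repr x i)^t * d i
  have hxb : ∀ (x : Fin N → K) (i : Fin N), H x (b i) = (b.repr x i) ^ t * d i := by
    intro x i
    conv_lhs => rw [← b.sum_repr x]
    rw [herm_sum_left hH]
    rw [Finset.sum_eq_single i]
    · rw [hH.2.2.1, hgram, if_pos rfl]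
    · intro j _ hj
      rw [hH.2.2.1, hgram, if_neg hj, mul_zero]
    · intro h; exact absurd (Finset.mem_univ i) h
  have hbx : ∀ (i : Fin N) (y : Fin N → K), d i = 0 → H (b i) y = 0 := by
    intro i y hdi
    conv_lhs => rw [← b.sum_repr y]
    rw [herm_sum_right hH]
    refine Finset.sum_eq_zero fun j _ => ?_
    rw [hH.2.2.2.1, hgram]
    by_cases h : i = j
    · rw [if_pos h, hdi, mul_zero]
    · rw [if_neg h, mul_zero]
  have hker : (hermKer t H hH : Submodule K (Fin N → K))
      = Submodule.span K (b '' ↑s) := by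
    apply le_antisymm
    · intro x hx
      have hx' : ∀ y, H x y = 0 := hx
      have hcoord : ∀ i, d i ≠ 0 → b.repr x i = 0 := by
        intro i hdi
        have h0 := hx' (b i)
        rw [hxb x i] at h0
        have := (mul_eq_zero.mp h0).resolve_right hdi
        exact pow_eq_zero_iff ht0 |>.mp this
      rw [← b.sum_repr x]
      refine Submodule.sum_mem _ fun i _ => ?_
      by_cases hdi : d i = 0
      · exact Submodule.smul_mem _ _ (Submodule.subset_span ⟨i, by simp [hmem, hdi], rfl⟩)
      · rw [hcoord i hdi, zero_smul]; exact Submodule.zero_mem _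
    · rw [Submodule.span_le]
      rintro _ ⟨i, hi, rfl⟩
      intro y
      exact hbx i y ((hmem i).mp (by exact_mod_cast hi))
  rw [hker]
  have hli : LinearIndependent K (fun i : ↥(↑s : Set (Fin N)) => b ↑i) :=
    b.linearIndependent.comp Subtype.val Subtype.val_injective
  have himg : (b '' ↑s) = Set.range (fun i : ↥(↑s : Set (Fin N)) => b ↑i) := by
    rw [← Set.image_eq_range]
  rw [himg, finrank_span_eq_card hli]
  simp

open scoped Classical in
lemma herm_rank_card (ht0 : t ≠ 0) (hH : IsSesquiHermitian t H)
    (b : Basis (Fin N) K (Fin N → K)) (d : Fin N → K)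
    (hd01 : ∀ i, d i = 0 ∨ d i = 1)
    (hgram : ∀ i j, H (b i) (b j) = if i = j then d i else 0) :
    N - finrank K (hermKer t H hH) = (Finset.univ.filter (fun i => d i = 1)).card ∧
      finrank K (hermKer t H hH) ≤ N := by
  classical
  rw [herm_ker_finrank ht0 hH b d hgram]
  have hsplit := Finset.card_filter_add_card_filter_not
    (s := (Finset.univ : Finset (Fin N))) (p := fun i => d i = 0)
  have heq : Finset.univ.filter (fun i => ¬ d i = 0)
      = Finset.univ.filter (fun i => d i = 1) := by
    refine Finset.filter_congr fun i _ => ?_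
    rcases hd01 i with h | h <;> simp [h]
  rw [heq] at hsplit
  simp only [Finset.card_univ, Fintype.card_fin] at hsplit
  omega

end Rank

section FieldFacts
variable {K : Type} [Field K] [Fintype K]

lemma two_ne_zero_of_card (p k t : ℕ) (hp : p.Prime) (hpodd : p ≠ 2) (hk : k ≠ 0)
    (ht : t = p ^ k) (hcK : Fintype.card K = t ^ 2) : (2 : K) ≠ 0 := by
  haveI := ringChar.charP K
  obtain ⟨n, hq, hcard⟩ := FiniteField.card K (ringChar K)
  have hdvd : ringChar K ∣ p ^ (2 * k) := by
    have : ringChar K ∣ ringChar K ^ (n : ℕ) := dvd_pow_self _ (by exact_mod_cast n.ne_zero)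
    rw [← hcard, hcK, ht, ← pow_mul, mul_comm k 2] at this
    exact this
  have hqp : ringChar K = p :=
    (Nat.prime_dvd_prime_iff_eq hq hp).mp (hq.dvd_of_dvd_pow hdvd)
  intro h2
  have : ((2 : ℕ) : K) = 0 := by exact_mod_cast h2
  have := (CharP.cast_eq_zero_iff K (ringChar K) 2).mp this
  rw [hqp] at this
  exact hpodd ((Nat.prime_dvd_prime_iff_eq hp Nat.prime_two).mp this)

lemma exists_lam_and_norm (p k t : ℕ) (hp : p.Prime) (hpodd : p ≠ 2) (hk : k ≠ 0)
    (ht : t = p ^ k) (hcK : Fintype.card K = t ^ 2) :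
    (∃ lam : K, lam ≠ 0 ∧ lam ^ t = -lam) ∧
      (∀ a : K, a ≠ 0 → a ^ t = a → ∃ c : K, c ^ (t + 1) = a) := by
  classical
  have hp3 : 3 ≤ p := by
    rcases hp.two_le.lt_or_eq with h | h
    · omega
    · omega
  have ht3 : 3 ≤ t := le_trans hp3 (by rw [ht]; exact Nat.le_self_pow hk p)
  have htodd : Odd t := by
    rw [ht]; exact (hp.odd_of_ne_two hpodd).pow
  obtain ⟨g, hg⟩ := IsCyclic.exists_generator (α := Kˣ)
  have hcardU : Fintype.card Kˣ = t ^ 2 - 1 := by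
    rw [Fintype.card_units, hcK]
  have horder : orderOf g = t ^ 2 - 1 := by
    rw [orderOf_eq_card_of_forall_mem_zpowers hg, Nat.card_eq_fintype_card, hcardU]
  -- arithmetic facts
  obtain ⟨r, hr⟩ := htodd
  have e1 : (t + 1) * (t - 1) = (2 * r + 2) * (2 * r) := by
    rw [hr]; congr 1 <;> omega
  have e2 : (2 * r + 2) * (2 * r) = 4 * (r * r) + 4 * r := by ring
  have e3 : t ^ 2 = 4 * (r * r) + 4 * r + 1 := by rw [hr]; ring
  have e4 : 1 * r ≤ r * r := Nat.mul_le_mul_right r (by omega)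
  have hkey : (t + 1) * (t - 1) = t ^ 2 - 1 := by omega
  have h2t1 : 2 * ((t + 1) / 2) = t + 1 := by omega
  have hm2 : 2 * ((t ^ 2 - 1) / 2) = t ^ 2 - 1 := by omega
  have ht2big : 8 ≤ t ^ 2 - 1 := by omega
  -- the element x = g ^ ((t²-1)/2) equals -1
  set m := (t ^ 2 - 1) / 2 with hmdef
  have hx2 : ((g : K) ^ m) ^ 2 = 1 := by
    rw [← pow_mul, mul_comm m 2, hmdef, hm2]
    have : (g : K) ^ (t ^ 2 - 1) = ((g ^ (t ^ 2 - 1) : Kˣ) : K) := by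
      rw [Units.val_pow_eq_pow_val]
    rw [this, ← horder, pow_orderOf_eq_one]; rfl
  have hxne1 : (g : K) ^ m ≠ 1 := by
    intro h
    have hu1 : g ^ m = 1 := by
      ext; rw [Units.val_pow_eq_pow_val, h]; rfl
    have := orderOf_dvd_of_pow_eq_one hu1
    rw [horder] at this
    have := Nat.le_of_dvd (by omega) this
    omega
  have hxneg : (g : K) ^ m = -1 := by
    have h0 : ((g : K) ^ m - 1) * ((g : K) ^ m + 1) = 0 := by
      linear_combination hx2
    rcases mul_eq_zero.mp h0 with h | h
    · exact absurd (by linear_combination h) hxne1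
    · linear_combination h
  -- lam
  have hlamexp : (t + 1) / 2 * (t - 1) = m := by
    have : 2 * ((t + 1) / 2 * (t - 1)) = 2 * m := by
      rw [← mul_assoc, h2t1, hkey, hmdef, hm2]
    omega
  refine ⟨⟨(g : K) ^ ((t + 1) / 2), pow_ne_zero _ (Units.ne_zero g), ?_⟩, ?_⟩
  · have h1 : ((g : K) ^ ((t + 1) / 2)) ^ (t - 1) = -1 := by
      rw [← pow_mul, hlamexp, hxneg]
    have : ((g : K) ^ ((t + 1) / 2)) ^ t
        = ((g : K) ^ ((t + 1) / 2)) ^ (t - 1) * (g : K) ^ ((t + 1) / 2) := by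
      rw [← pow_succ]
      congr 1
      omega
    rw [this, h1, neg_one_mul]
  · -- norm surjectivity
    intro a ha hat
    have hat1 : a ^ (t - 1) = 1 := by
      have h1 : a ^ (t - 1) * a = a := by
        rw [← pow_succ]
        have : t - 1 + 1 = t := by omega
        rw [this, hat]
      have := mul_right_cancel₀ ha (h1.trans (one_mul a).symm)
      exact this
    set ua : Kˣ := Units.mk0 a ha with hua
    obtain ⟨j, hj⟩ := Subgroup.mem_zpowers_iff.mp (hg ua)
    have huat : ua ^ (t - 1) = 1 := by
      ext; rw [Units.val_pow_eq_pow_val]; exact hat1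
    have hz : g ^ (j * ((t : ℤ) - 1)) = 1 := by
      rw [zpow_mul]
      have hcast : ((t : ℤ) - 1) = ((t - 1 : ℕ) : ℤ) := by omega
      rw [hcast, zpow_natCast, hj, huat]
    have hdvd : ((t ^ 2 - 1 : ℕ) : ℤ) ∣ j * ((t : ℤ) - 1) := by
      rw [← horder]
      exact orderOf_dvd_iff_zpow_eq_one.mpr hz
    have hcast2 : ((t ^ 2 - 1 : ℕ) : ℤ) = ((t : ℤ) + 1) * ((t : ℤ) - 1) := by
      have : (1 : ℕ) ≤ t ^ 2 := by nlinarith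
      push_cast [this]
      ring
    rw [hcast2] at hdvd
    have ht1ne : ((t : ℤ) - 1) ≠ 0 := by omega
    have hdvd2 : ((t : ℤ) + 1) ∣ j := by
      rcases hdvd with ⟨e, he⟩
      exact ⟨e, mul_right_cancel₀ ht1ne
        (show j * ((t:ℤ)-1) = (((t:ℤ)+1) * e) * ((t:ℤ)-1) by rw [he]; ring)⟩
    obtain ⟨j', hj'⟩ := hdvd2
    refine ⟨((g ^ j' : Kˣ) : K), ?_⟩
    have : ((g ^ j' : Kˣ) : K) ^ (t + 1) = ((g ^ j' : Kˣ) ^ (t + 1) : Kˣ) := by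
      rw [Units.val_pow_eq_pow_val]
    rw [this]
    have : (g ^ j' : Kˣ) ^ (t + 1) = g ^ j := by
      rw [← zpow_natCast (g ^ j'), ← zpow_mul, hj']
      congr 1
      push_cast
      ring
    rw [this, hj, hua]
    rfl

end FieldFacts
end Basic

/-- Two quadratic hermitian forms `q₁, q₂` on `F_{t²}^N` (with polar hermitian forms
`H₁, H₂`) are equivalent — there is a linear automorphism `u` with `q₂ = q₁ ∘ u` —
if and only if their polar forms have the same rank. -/
theorem stmt_9 (p k t N : ℕ) (hp : p.Prime) (hpodd : p ≠ 2) (hk : k ≠ 0) (ht : t = p ^ k)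
    (hN : 1 ≤ N) (K : Type) [Field K] [Fintype K] (hcK : Fintype.card K = t ^ 2)
    (H₁ H₂ : (Fin N → K) → (Fin N → K) → K)
    (hH₁ : IsSesquiHermitian t H₁) (hH₂ : IsSesquiHermitian t H₂) :
    (∃ u : (Fin N → K) ≃ₗ[K] (Fin N → K), ∀ x, H₂ x x = H₁ (u x) (u x)) ↔
    N - Module.finrank K (hermKer t H₁ hH₁) =
      N - Module.finrank K (hermKer t H₂ hH₂) := by
  classical
  have ht0 : t ≠ 0 := by rw [ht]; exact pow_ne_zero _ hp.pos.ne'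
  have h2 := two_ne_zero_of_card (K := K) p k t hp hpodd hk ht hcK
  obtain ⟨⟨lam, hl0, hlt⟩, hnorm⟩ :=
    exists_lam_and_norm (K := K) p k t hp hpodd hk ht hcK
  constructor
  · rintro ⟨u, hu⟩
    have hG : IsSesquiHermitian t (fun x y => H₁ (u x) (u y)) := by
      refine ⟨fun x x' y => ?_, fun x y y' => ?_, fun c x y => ?_, fun c x y => ?_,
        fun x y => ?_⟩
      · simp only [map_add]; exact hH₁.1 _ _ _
      · simp only [map_add]; exact hH₁.2.1 _ _ _
      · simp only [map_smul]; exact hH₁.2.2.1 _ _ _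
      · simp only [map_smul]; exact hH₁.2.2.2.1 _ _ _
      · exact hH₁.2.2.2.2 _ _
    have key : ∀ x y, H₂ x y = H₁ (u x) (u y) :=
      herm_ext hH₂ hG h2 lam hl0 hlt hu
    have hker : hermKer t H₂ hH₂
        = Submodule.comap (u : (Fin N → K) ≃ₗ[K] (Fin N → K)).toLinearMap
            (hermKer t H₁ hH₁) := by
      ext x
      constructor
      · intro hx
        intro z
        have hz := hx (u.symm z)
        rw [key] at hz
        rwa [u.apply_symm_apply] at hz
      · intro hx y
        rw [key]
        exact hx (u y)
    have hfr : finrank K (hermKer t H₂ hH₂) = finrank K (hermKer t H₁ hH₁) := by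
      rw [hker]
      rw [show ((u : (Fin N → K) ≃ₗ[K] (Fin N → K)).toLinearMap)
          = ((u : (Fin N → K) ≃ₗ[K] (Fin N → K)) : (Fin N → K) →ₗ[K] (Fin N → K)) from rfl,
        Submodule.comap_equiv_eq_map_symm]
      exact LinearEquiv.finrank_map_eq u.symm _
    rw [hfr]
  · intro hrank
    obtain ⟨b₁, d₁, hd₁, hg₁⟩ := herm_diag ht0 h2 lam hl0 hlt hnorm N H₁ hH₁
    obtain ⟨b₂, d₂, hd₂, hg₂⟩ := herm_diag ht0 h2 lam hl0 hlt hnorm N H₂ hH₂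
    obtain ⟨hr₁, hle₁⟩ := herm_rank_card ht0 hH₁ b₁ d₁ hd₁ hg₁
    obtain ⟨hr₂, hle₂⟩ := herm_rank_card ht0 hH₂ b₂ d₂ hd₂ hg₂
    set s₁ : Finset (Fin N) := Finset.univ.filter (fun i => d₁ i = 1) with hs₁
    set s₂ : Finset (Fin N) := Finset.univ.filter (fun i => d₂ i = 1) with hs₂
    have hcards : s₂.card = s₁.card := by
      rw [hs₁, hs₂]
      rw [← hr₁, ← hr₂, hrank]
    have hcards' : Fintype.card {x // ¬ x ∈ s₂} = Fintype.card {x // ¬ x ∈ s₁} := by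
      rw [Fintype.card_subtype_compl, Fintype.card_subtype_compl,
        Fintype.card_coe, Fintype.card_coe, hcards]
    set e₁ : {x // x ∈ s₂} ≃ {x // x ∈ s₁} := Finset.equivOfCardEq hcards with he₁
    set e₀ : {x // ¬ x ∈ s₂} ≃ {x // ¬ x ∈ s₁} := Fintype.equivOfCardEq hcards' with he₀
    set e : Fin N ≃ Fin N :=
      (Equiv.sumCompl (· ∈ s₂)).symm.trans ((e₁.sumCongr e₀).trans
        (Equiv.sumCompl (· ∈ s₁))) with he
    have hde : ∀ i, d₁ (e i) = d₂ i := by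
      intro i
      by_cases hi : i ∈ s₂
      · have hd2i : d₂ i = 1 := (Finset.mem_filter.mp hi).2
        have hei : e i = ↑(e₁ ⟨i, hi⟩) := by
          rw [he]
          simp only [Equiv.trans_apply, Equiv.sumCompl_symm_apply_of_pos hi,
            Equiv.sumCongr_apply, Sum.map_inl, Equiv.sumCompl_apply_inl]
        have : (↑(e₁ ⟨i, hi⟩) : Fin N) ∈ s₁ := (e₁ ⟨i, hi⟩).2
        have hd1 : d₁ (e i) = 1 := by
          rw [hei]; exact (Finset.mem_filter.mp this).2
        rw [hd1, hd2i]
      · have hd2i : d₂ i = 0 := by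
          rcases hd₂ i with h | h
          · exact h
          · exact absurd (Finset.mem_filter.mpr ⟨Finset.mem_univ i, h⟩) hi
        have hei : e i = ↑(e₀ ⟨i, hi⟩) := by
          rw [he]
          simp only [Equiv.trans_apply, Equiv.sumCompl_symm_apply_of_neg hi,
            Equiv.sumCongr_apply, Sum.map_inr, Equiv.sumCompl_apply_inr]
        have hnot : ¬ (↑(e₀ ⟨i, hi⟩) : Fin N) ∈ s₁ := (e₀ ⟨i, hi⟩).2
        have hd1 : d₁ (e i) = 0 := by
          rcases hd₁ (e i) with h | h
          · exact h
          · exfalso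
            apply hnot
            rw [← hei]
            exact Finset.mem_filter.mpr ⟨Finset.mem_univ _, h⟩
        rw [hd1, hd2i]
    refine ⟨b₂.equiv b₁ e, fun x => ?_⟩
    set u := b₂.equiv b₁ e with hudef
    have hux : ∀ z, u z = ∑ i, b₂.repr z i • b₁ (e i) := by
      intro z
      conv_lhs => rw [← b₂.sum_repr z]
      rw [map_sum]
      exact Finset.sum_congr rfl fun i _ => by rw [map_smul, hudef, Basis.equiv_apply]
    have main : ∀ x y, H₂ x y = H₁ (u x) (u y) := by
      intro x y
      rw [hux x, hux y, herm_expand hH₁, herm_repr hH₂ b₂ x y]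
      refine Finset.sum_congr rfl fun i _ => Finset.sum_congr rfl fun j _ => ?_
      rw [hg₁ (e i) (e j), hg₂ i j]
      by_cases h : i = j
      · subst h
        rw [if_pos rfl, if_pos rfl, hde i]
      · rw [if_neg h, if_neg (fun hc => h (e.injective hc))]
    exact main x x
end

section
/- Let t be an odd prime power, N ≥ 1, H a sesquilinear hermitian form on F_{t²}^N, ι : F_t^{2N} → F_{t²}^N as below, f(x) = H(ιx, ιx), and B(x,y) = f(x+y) − f(x) − f(y). Then ι(Ker B) = Ker H; in particular ι induces an F_t-isomorphism from Ker B onto Ker H, and rk f = rk B = 2 · rk H. -/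
/-- The `F_t`-isomorphism `ι : F_t^{2N} → F_{t²}^N`,
`ι(x₁,…,x₂ₙ) = (x₁ + α x₂, …, x₂ₙ₋₁ + α x₂ₙ)`. -/
def iota (N : ℕ) (F K : Type) [Field F] [Field K] [Algebra F K] (α : K)
    (x : Fin (2 * N) → F) : Fin N → K :=
  fun i => algebraMap F K (x ⟨2 * i.1, by have := i.isLt; omega⟩) +
    algebraMap F K (x ⟨2 * i.1 + 1, by have := i.isLt; omega⟩) * α

/-- With `f(x) = H(ιx, ιx)` and `B(x,y) = f(x+y) − f(x) − f(y)`, one has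
`ι(Ker B) = Ker H` (so `ι` induces an `F_t`-isomorphism `Ker B ≅ Ker H`) and
`rk f = rk B = 2 · rk H`. -/
theorem stmt_11 (p k t N : ℕ) (hp : p.Prime) (hpodd : p ≠ 2) (hk : k ≠ 0) (ht : t = p ^ k)
    (hN : 1 ≤ N) (F K : Type) [Field F] [Field K] [Algebra F K] [Fintype F] [Fintype K]
    (hcF : Fintype.card F = t) (hcK : Fintype.card K = t ^ 2)
    (H : (Fin N → K) → (Fin N → K) → K) (hH : IsSesquiHermitian t H)
    (α : K) (hα : Algebra.adjoin F ({α} : Set K) = ⊤)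
    (f : (Fin (2 * N) → F) → K)
    (hf : ∀ x, f x = H (iota N F K α x) (iota N F K α x))
    (B : (Fin (2 * N) → F) → (Fin (2 * N) → F) → K)
    (hB : ∀ x y, B x y = f (x + y) - f x - f y) :
    ∃ (W : Submodule F (Fin (2 * N) → F)) (V : Submodule K (Fin N → K)),
      (∀ x, x ∈ W ↔ ∀ y, B x y = 0) ∧
      (∀ z, z ∈ V ↔ ∀ w, H z w = 0) ∧
      iota N F K α '' (W : Set (Fin (2 * N) → F)) = (V : Set (Fin N → K)) ∧
      2 * N - Module.finrank F W = 2 * (N - Module.finrank K V) := by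
  classical
  obtain ⟨hadd1, hadd2, hsmul1, hsmul2, hsymm⟩ := hH
  have ht1 : 1 < t := ht ▸ Nat.one_lt_pow hk hp.one_lt
  -- [K : F] = 2
  have hrFK : Module.finrank F K = 2 := by
    have h1 : Fintype.card K = Fintype.card F ^ Module.finrank F K :=
      Module.card_eq_pow_finrank (K := F) (V := K)
    rw [hcK, hcF] at h1
    exact (Nat.pow_right_injective ht1 h1.symm)
  -- α is not in the image of F
  have hαnot : α ∉ Set.range (algebraMap F K) := by
    intro hc
    have hle : Algebra.adjoin F ({α} : Set K) ≤ ⊥ :=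
      Algebra.adjoin_le (by simpa [Algebra.mem_bot] using hc)
    rw [hα] at hle
    have hbt : (⊥ : Subalgebra F K) = ⊤ := le_antisymm le_top hle
    have := Subalgebra.bot_eq_top_iff_finrank_eq_one.mp hbt
    omega
  -- α is not fixed by x ↦ x ^ t
  have hconj : α ^ t ≠ α := by
    intro hroot
    set q : Polynomial K := Polynomial.X ^ t - Polynomial.X with hq
    have hdegX : (Polynomial.X : Polynomial K).natDegree < (Polynomial.X ^ t : Polynomial K).natDegree := by
      simp [Polynomial.natDegree_X_pow]; omega
    have hdeg : q.natDegree = t := by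
      rw [hq, Polynomial.natDegree_sub_eq_left_of_natDegree_lt hdegX, Polynomial.natDegree_X_pow]
    have hq0 : q ≠ 0 := by
      intro h
      rw [h] at hdeg
      simp at hdeg
      omega
    have hmem : ∀ z : K, z ^ t = z → z ∈ q.roots.toFinset := by
      intro z hz
      simp only [Multiset.mem_toFinset, Polynomial.mem_roots', Polynomial.IsRoot, hq]
      refine ⟨hq0, ?_⟩
      simp [hz]
    set S : Finset K := insert α ((Finset.univ : Finset F).image (algebraMap F K)) with hS
    have hαS : α ∉ (Finset.univ : Finset F).image (algebraMap F K) := by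
      intro h
      obtain ⟨c, _, hc⟩ := Finset.mem_image.mp h
      exact hαnot ⟨c, hc⟩
    have hcard : S.card = t + 1 := by
      rw [hS, Finset.card_insert_of_notMem hαS,
        Finset.card_image_of_injective _ (algebraMap F K).injective, Finset.card_univ, hcF]
    have hsub : S ⊆ q.roots.toFinset := by
      intro z hz
      rcases Finset.mem_insert.mp hz with h | h
      · exact hmem z (h ▸ hroot)
      · obtain ⟨c, _, rfl⟩ := Finset.mem_image.mp h
        apply hmem
        rw [← map_pow]
        congr 1
        rw [← hcF]
        exact FiniteField.pow_card c
    have h1 := Finset.card_le_card hsub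
    have h2 : q.roots.toFinset.card ≤ Multiset.card q.roots := q.roots.toFinset_card_le
    have h3 : Multiset.card q.roots ≤ q.natDegree := Polynomial.card_roots' q
    omega
  -- the linear map ι
  set e0 : (Fin (2 * N) → F) →ₗ[F] (Fin N → K) :=
    { toFun := iota N F K α
      map_add' := by
        intro x y
        funext i
        simp only [iota, Pi.add_apply, map_add]
        ring
      map_smul' := by
        intro c x
        funext i
        simp only [iota, Pi.smul_apply, smul_eq_mul, map_mul, Algebra.smul_def, RingHom.id_apply]
        ring } with he0
  have he0app : ∀ x, e0 x = iota N F K α x := fun _ => rfl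
  -- injectivity of ι
  have hkey : ∀ x, e0 x = 0 → x = 0 := by
    intro x hx
    funext j
    have hj2 : j.1 / 2 < N := by have := j.isLt; omega
    have hcomp := congrFun hx ⟨j.1 / 2, hj2⟩
    simp only [he0, LinearMap.coe_mk, AddHom.coe_mk, iota, Pi.zero_apply] at hcomp
    set a := x ⟨2 * (j.1 / 2), by omega⟩ with ha'
    set b := x ⟨2 * (j.1 / 2) + 1, by omega⟩ with hb'
    have hb : b = 0 := by
      by_contra hb
      apply hαnot
      refine ⟨-a / b, ?_⟩
      have hbK : algebraMap F K b ≠ 0 := by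
        simpa using hb
      rw [map_div₀, map_neg, div_eq_iff hbK]
      linear_combination -hcomp
    have ha : a = 0 := by
      rw [hb] at hcomp
      simp only [map_zero, zero_mul, add_zero] at hcomp
      exact (map_eq_zero (algebraMap F K)).mp hcomp
    have hj : j = (⟨2 * (j.1 / 2), by omega⟩ : Fin (2 * N)) ∨
        j = (⟨2 * (j.1 / 2) + 1, by omega⟩ : Fin (2 * N)) := by
      rcases Nat.even_or_odd j.1 with ⟨m, hm⟩ | ⟨m, hm⟩
      · left; apply Fin.ext; simp; omega
      · right; apply Fin.ext; simp; omega
    rcases hj with hj | hj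
    · rw [hj]; exact ha
    · rw [hj]; exact hb
  have hinj : Function.Injective e0 := by
    intro x y hxy
    have := hkey (x - y) (by rw [map_sub, hxy, sub_self])
    exact sub_eq_zero.mp this
  -- dimensions agree, so ι is bijective
  have hr1 : Module.finrank F (Fin (2 * N) → F) = 2 * N := by
    simp [Module.finrank_pi]
  have hrKN : Module.finrank K (Fin N → K) = N := by
    simp [Module.finrank_pi]
  have hr2 : Module.finrank F (Fin N → K) = 2 * N := by
    have := Module.finrank_mul_finrank F K (Fin N → K)
    rw [hrFK, hrKN] at this
    omega
  set e : (Fin (2 * N) → F) ≃ₗ[F] (Fin N → K) :=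
    e0.linearEquivOfInjective hinj (hr1.trans hr2.symm) with he
  have heapp : ∀ x, e x = iota N F K α x := fun _ => rfl
  have hsurj : Function.Surjective (iota N F K α) := by
    intro w
    obtain ⟨x, hx⟩ := e.surjective w
    exact ⟨x, hx⟩
  -- the kernel of H
  set V : Submodule K (Fin N → K) :=
    { carrier := {z | ∀ w, H z w = 0}
      add_mem' := by
        intro a b ha hb w
        rw [hadd1, ha w, hb w, add_zero]
      zero_mem' := by
        intro w
        have h := hadd1 0 0 w
        rw [add_zero] at h
        exact left_eq_add.mp h
      smul_mem' := by
        intro c z hz w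
        rw [hsmul1, hz w, mul_zero] } with hV
  have hVmem : ∀ z, z ∈ V ↔ ∀ w, H z w = 0 := fun z => Iff.rfl
  -- the kernel of B as a submodule
  set W : Submodule F (Fin (2 * N) → F) := (V.restrictScalars F).comap e0 with hW
  have hWmem : ∀ x, x ∈ W ↔ ∀ w, H (iota N F K α x) w = 0 := fun x => Iff.rfl
  -- B in terms of H
  have hB' : ∀ x y, B x y =
      H (iota N F K α x) (iota N F K α y) + H (iota N F K α y) (iota N F K α x) := by
    intro x y
    have hadd : iota N F K α (x + y) = iota N F K α x + iota N F K α y := e0.map_add x y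
    rw [hB, hf, hf, hf, hadd, hadd1, hadd2, hadd2]
    ring
  -- the main equivalence
  have hWiff : ∀ x, (∀ w, H (iota N F K α x) w = 0) ↔ (∀ y, B x y = 0) := by
    intro x
    constructor
    · intro h y
      rw [hB' x y, h (iota N F K α y), hsymm (iota N F K α y) (iota N F K α x),
        h (iota N F K α y), zero_pow (by omega : t ≠ 0), add_zero]
    · intro h w
      obtain ⟨y, hy⟩ := hsurj w
      obtain ⟨y', hy'⟩ := hsurj (α • w)
      have h1 := h y
      have h2 := h y'
      rw [hB', hy] at h1
      rw [hB', hy'] at h2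
      rw [hsymm w (iota N F K α x)] at h1
      rw [hsymm (α • w) (iota N F K α x), hsmul2] at h2
      set u := H (iota N F K α x) w with hu
      -- h1 : u + u ^ t = 0, h2 : α * u + (α * u) ^ t = 0
      rw [mul_pow] at h2
      have hz : (α - α ^ t) * u = 0 := by
        linear_combination h2 - α ^ t * h1
      rcases mul_eq_zero.mp hz with hz | hz
      · exact absurd (sub_eq_zero.mp hz) (Ne.symm hconj)
      · exact hz
  -- the image statement
  have himg : iota N F K α '' (W : Set (Fin (2 * N) → F)) = (V : Set (Fin N → K)) := by
    have hWs : (W : Set (Fin (2 * N) → F)) = iota N F K α ⁻¹' (V : Set (Fin N → K)) := rfl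
    rw [hWs, Set.image_preimage_eq _ hsurj]
  -- ranks
  have hWr : Module.finrank F W = 2 * Module.finrank K V := by
    have hWc : W = Submodule.comap (e.toLinearMap) (V.restrictScalars F) := rfl
    rw [hWc, Submodule.comap_equiv_eq_map_symm]
    rw [LinearEquiv.finrank_map_eq]
    have h3 : Module.finrank F K * Module.finrank K V = Module.finrank F (V.restrictScalars F) :=
      Module.finrank_mul_finrank F K V
    rw [← h3, hrFK]
  have hVle : Module.finrank K V ≤ N := by
    have := Submodule.finrank_le V
    rwa [hrKN] at this
  refine ⟨W, V, ?_, hVmem, himg, ?_⟩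
  · intro x
    exact (hWmem x).trans (hWiff x)
  · rw [hWr]
    omega
end

section
/- Let p be an odd prime, F_p ⊆ F_s ⊆ F_t ⊆ F_{t²} finite fields, N ≥ 1, and f a quadratic hermitian form of rank 2ρ on F_t^{2N} (1 ≤ ρ ≤ N), with bilinear form B and endomorphism T satisfying B(x,y) = T(x)·y. Let v ∈ Im T and u ∈ F_t^{2N} with v = T(u). Then Σ_{a ∈ F_s^*} S(af, v) = (−1)^ρ t^{2N−ρ} A(s,v), where A(s,v) = s − 1 if Tr_{F_t/F_s}(f(u)) = 0 and A(s,v) = −1 otherwise. (The value of Tr_{F_t/F_s}(f(u)) does not depend on the choice of u with T(u) = v.) -/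
noncomputable def zetaP (p : ℕ) : ℂ := Complex.exp (2 * Real.pi * Complex.I / p)

lemma zetaP_prim (p : ℕ) [Fact p.Prime] : IsPrimitiveRoot (zetaP p) p := by
  have hp : (p : ℕ) ≠ 0 := (Fact.out : p.Prime).ne_zero
  exact Complex.isPrimitiveRoot_exp p hp

lemma zetaP_pow_p (p : ℕ) [Fact p.Prime] : zetaP p ^ p = 1 := (zetaP_prim p).pow_eq_one

section Char

variable (p : ℕ) [Fact p.Prime] (F : Type) [Field F] [Fintype F] [Algebra (ZMod p) F]

noncomputable def psiF : F → ℂ := fun z => zetaP p ^ (Algebra.trace (ZMod p) F z).val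

lemma psiF_eq (ψ : F → ℂ)
    (hψ : ∀ z, ψ z = Complex.exp
      (2 * Real.pi * Complex.I * ((Algebra.trace (ZMod p) F z).val : ℂ) / p)) :
    ψ = psiF p F := by
  funext z
  rw [hψ, psiF, zetaP, ← Complex.exp_nat_mul]
  ring_nf

variable {p F}

lemma psiF_zero : psiF p F 0 = 1 := by
  simp [psiF]

lemma psiF_add (x y : F) : psiF p F (x + y) = psiF p F x * psiF p F y := by
  have hp : 0 < p := (Fact.out : p.Prime).pos
  simp only [psiF, map_add]
  rw [ZMod.val_add, ← pow_eq_pow_mod _ (zetaP_pow_p p), pow_add]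

lemma psiF_ne_one {z : F} (hz : Algebra.trace (ZMod p) F z ≠ 0) : psiF p F z ≠ 1 := by
  have hv : (Algebra.trace (ZMod p) F z).val ≠ 0 := by
    simpa [ZMod.val_eq_zero] using hz
  have hlt : (Algebra.trace (ZMod p) F z).val < p := ZMod.val_lt _
  intro h
  have := ((zetaP_prim p).pow_eq_one_iff_dvd _).mp h
  exact hv (Nat.eq_zero_of_dvd_of_lt this hlt)

lemma psiF_mul_sum {b : F} (hb : b ≠ 0) : ∑ e : F, psiF p F (b * e) = 0 := by
  obtain ⟨w, hw⟩ := Algebra.trace_surjective (ZMod p) F 1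
  have hwtr : Algebra.trace (ZMod p) F (b * (b⁻¹ * w)) ≠ 0 := by
    rw [← mul_assoc, mul_inv_cancel₀ hb, one_mul, hw]; exact one_ne_zero
  set e₀ := b⁻¹ * w with he₀
  have hne : psiF p F (b * e₀) ≠ 1 := psiF_ne_one hwtr
  have key : psiF p F (b * e₀) * (∑ e : F, psiF p F (b * e)) = ∑ e : F, psiF p F (b * e) := by
    rw [Finset.mul_sum]
    rw [← Equiv.sum_comp (Equiv.addLeft e₀) (fun e => psiF p F (b * e))]
    apply Finset.sum_congr rfl
    intro e _
    rw [← psiF_add, Equiv.coe_addLeft, mul_add]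
  have : (psiF p F (b * e₀) - 1) * (∑ e : F, psiF p F (b * e)) = 0 := by
    rw [sub_mul, one_mul, key, sub_self]
  rcases mul_eq_zero.mp this with h | h
  · exact absurd (by linear_combination h) hne
  · exact h

lemma psiF_sum_units {c : F} [DecidableEq F] :
    ∑ a : Fˣ, psiF p F ((a : F) * c) =
      if c = 0 then (Fintype.card F : ℂ) - 1 else -1 := by
  have key : (∑ e : F, psiF p F (e * c))
      = psiF p F (0 * c) + ∑ a : Fˣ, psiF p F ((a : F) * c) := by
    rw [← Equiv.sum_comp (Equiv.sumCompl (· = (0 : F)))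
      (fun e => psiF p F (e * c)), Fintype.sum_sum_type]
    congr 1
    · rw [Fintype.sum_eq_single (⟨0, rfl⟩ : {a : F // a = 0})]
      · simp
      · rintro ⟨b, rfl⟩ h; simp at h ⊢
    · rw [show (∑ a₂ : { a : F // ¬a = 0 },
          psiF p F ((Equiv.sumCompl fun x => x = 0) (Sum.inr a₂) * c))
          = ∑ e : {a : F // a ≠ (0:F)}, psiF p F ((e : F) * c) from rfl,
        ← Equiv.sum_comp unitsEquivNeZero (fun e : {a : F // a ≠ (0:F)} =>
          psiF p F ((e : F) * c))]
      rfl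
  by_cases hc : c = 0
  · subst hc
    simp only [mul_zero, psiF_zero, if_pos rfl]
    rw [Finset.sum_const, Finset.card_univ, Fintype.card_units]
    have h2 : (1 : ℕ) ≤ Fintype.card F := Fintype.card_pos
    rw [if_pos trivial, nsmul_eq_mul, mul_one, Nat.cast_sub h2, Nat.cast_one]
  · rw [if_neg hc]
    have hsum : (∑ e : F, psiF p F (e * c)) = 0 := by
      have := psiF_mul_sum (p := p) (F := F) hc
      rw [← this]
      exact Finset.sum_congr rfl (fun e _ => by rw [mul_comm])
    rw [hsum, zero_mul, psiF_zero] at key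
    linear_combination -key

end Char

section Sub

open Polynomial

variable {t : ℕ} (ht : 2 ≤ t)
variable {Ft K : Type} [Field Ft] [Field K] [Fintype Ft] [Fintype K]
  [Algebra Ft K] (hct : Fintype.card Ft = t) (hcK : Fintype.card K = t ^ 2)

lemma aM_inj : Function.Injective (algebraMap Ft K) := (algebraMap Ft K).injective

include hct in
lemma aM_pow_t (e : Ft) : (algebraMap Ft K e) ^ t = algebraMap Ft K e := by
  rw [← map_pow]
  congr 1
  rw [← hct]
  exact FiniteField.pow_card e

include hcK in
lemma K_pow_t2 (k : K) : k ^ (t ^ 2) = k := by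
  rw [← hcK]; exact FiniteField.pow_card k

include ht hct in
lemma mem_range_of_pow_t {k : K} (hk : k ^ t = k) :
    k ∈ Set.range (algebraMap Ft K) := by
  classical
  by_contra hnot
  set S : Finset K := Finset.univ.image (algebraMap Ft K) with hS
  have hcardS : S.card = t := by
    rw [hS, Finset.card_image_of_injective _ aM_inj, Finset.card_univ, hct]
  set q : K[X] := X ^ t - X with hq
  have hdeg : q.natDegree = t := by
    rw [hq, natDegree_sub_eq_left_of_natDegree_lt, natDegree_X_pow]
    rw [natDegree_X_pow, natDegree_X]; omega
  have hq0 : q ≠ 0 := by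
    intro h
    rw [h, natDegree_zero] at hdeg; omega
  have hroot : ∀ x : K, x ^ t = x → x ∈ q.roots.toFinset := by
    intro x hx
    rw [Multiset.mem_toFinset, mem_roots hq0]
    simp [hq, IsRoot.def, hx]
  have hsub : insert k S ⊆ q.roots.toFinset := by
    intro x hx
    rcases Finset.mem_insert.mp hx with rfl | hx
    · exact hroot _ hk
    · rcases Finset.mem_image.mp hx with ⟨e, _, rfl⟩
      exact hroot _ (aM_pow_t hct e)
  have h1 : (insert k S).card = t + 1 := by
    rw [Finset.card_insert_of_notMem, hcardS]
    intro hmem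
    rcases Finset.mem_image.mp hmem with ⟨e, _, rfl⟩
    exact hnot ⟨e, rfl⟩
  have h2 : q.roots.toFinset.card ≤ t := le_trans (Multiset.toFinset_card_le _)
    (hdeg ▸ q.card_roots')
  have := Finset.card_le_card hsub
  omega

/-- number of solutions to `x ^ m = 1` is at most `m` -/
lemma card_pow_eq_one_le {m : ℕ} (hm : 0 < m) [DecidableEq K] :
    (Finset.univ.filter (fun x : K => x ^ m = 1)).card ≤ m := by
  classical
  set q : K[X] := X ^ m - 1 with hq
  have hdeg : q.natDegree = m := by
    rw [hq]
    have : natDegree (1 : K[X]) < natDegree (X ^ m : K[X]) := by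
      rw [natDegree_one, natDegree_X_pow]; omega
    rw [natDegree_sub_eq_left_of_natDegree_lt this, natDegree_X_pow]
  have hq0 : q ≠ 0 := by
    intro h; rw [h, natDegree_zero] at hdeg; omega
  have hsub : Finset.univ.filter (fun x : K => x ^ m = 1) ⊆ q.roots.toFinset := by
    intro x hx
    rw [Finset.mem_filter] at hx
    rw [Multiset.mem_toFinset, mem_roots hq0]
    simp [hq, IsRoot.def, hx.2, sub_eq_zero]
  calc (Finset.univ.filter (fun x : K => x ^ m = 1)).card
      ≤ q.roots.toFinset.card := Finset.card_le_card hsub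
    _ ≤ Multiset.card q.roots := Multiset.toFinset_card_le _
    _ ≤ q.natDegree := q.card_roots'
    _ = m := hdeg

/-- fibers of `c ↦ c ^ m` over attained values all have the card of the unit fiber -/
lemma fiber_card_eq {m : ℕ} (hm : 0 < m) [DecidableEq K] {c₀ : K} (hc₀ : c₀ ≠ 0) :
    ((Finset.univ.filter (fun c : K => c ≠ 0)).filter
        (fun c : K => c ^ m = c₀ ^ m)).card =
      (Finset.univ.filter (fun x : K => x ^ m = 1)).card := by
  apply Finset.card_nbij' (fun c => c / c₀) (fun x => c₀ * x)
  · intro a ha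
    simp only [Finset.mem_coe, Finset.mem_filter, Finset.mem_univ, true_and] at ha ⊢
    rw [div_pow, ha.2, div_self (pow_ne_zero _ hc₀)]
  · intro x hx
    simp only [Finset.mem_coe, Finset.mem_filter, Finset.mem_univ, true_and] at hx ⊢
    have hx0 : x ≠ 0 := by
      intro h; rw [h, zero_pow hm.ne'] at hx
      exact zero_ne_one hx
    refine ⟨mul_ne_zero hc₀ hx0, ?_⟩
    rw [mul_pow, hx, mul_one]
  · intro a ha
    simp only [Finset.mem_coe, Finset.mem_filter, Finset.mem_univ, true_and] at ha
    field_simp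
  · intro x hx
    field_simp
end Sub

section Sub2

open Polynomial

variable {t : ℕ} (ht : 2 ≤ t)
variable {Ft K : Type} [Field Ft] [Field K] [Fintype Ft] [Fintype K]
  [Algebra Ft K] (hct : Fintype.card Ft = t) (hcK : Fintype.card K = t ^ 2)

lemma t2_help {t : ℕ} (ht : 2 ≤ t) : t ^ 2 - 1 = (t + 1) * (t - 1) := by
  apply Nat.sub_eq_of_eq_add
  obtain ⟨m, rfl⟩ : ∃ m, t = m + 2 := ⟨t - 2, by omega⟩
  simp only [show m + 2 - 1 = m + 1 from rfl]
  ring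

lemma group_count [DecidableEq K] (D : Finset K) (g : K → K) (k : ℕ)
    (hfib : ∀ y ∈ D.image g, (D.filter fun c => g c = y).card = k) :
    D.card = (D.image g).card * k := by
  rw [Finset.card_eq_sum_card_fiberwise (fun x hx => Finset.mem_image_of_mem g hx),
    Finset.sum_congr rfl hfib, Finset.sum_const, smul_eq_mul]

include ht hct in
lemma card_subU [DecidableEq K] :
    (Finset.univ.filter fun x : K => x ^ (t - 1) = 1).card = t - 1 := by
  classical
  have hle := card_pow_eq_one_le (K := K) (m := t - 1) (by omega)
  set I : Finset K :=
    (Finset.univ.filter (fun e : Ft => e ≠ 0)).image (algebraMap Ft K) with hI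
  have hIcard : I.card = t - 1 := by
    rw [hI, Finset.card_image_of_injective _ aM_inj, Finset.filter_ne',
      Finset.card_erase_of_mem (Finset.mem_univ _), Finset.card_univ, hct]
  have hsub : I ⊆ Finset.univ.filter fun x : K => x ^ (t - 1) = 1 := by
    intro x hx
    rcases Finset.mem_image.mp hx with ⟨e, he, rfl⟩
    rw [Finset.mem_filter] at he ⊢
    refine ⟨Finset.mem_univ _, ?_⟩
    rw [← map_pow, ← hct, FiniteField.pow_card_sub_one_eq_one e he.2, map_one]
  have := Finset.card_le_card hsub
  omega

include ht hct hcK in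
lemma card_subV [DecidableEq K] :
    (Finset.univ.filter fun x : K => x ^ (t + 1) = 1).card = t + 1 := by
  classical
  set D : Finset K := Finset.univ.filter (fun c : K => c ≠ 0) with hD
  have hDcard : D.card = t ^ 2 - 1 := by
    rw [hD, Finset.filter_ne', Finset.card_erase_of_mem (Finset.mem_univ _),
      Finset.card_univ, hcK]
  have hgc := group_count D (fun c => c ^ (t - 1)) (t - 1) ?fib
  case fib =>
    intro y hy
    rcases Finset.mem_image.mp hy with ⟨c₀, hc₀, rfl⟩
    rw [hD] at hc₀
    rw [Finset.mem_filter] at hc₀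
    rw [hD, fiber_card_eq (by omega : 0 < t - 1) hc₀.2]
    exact card_subU ht hct
  -- image ⊆ V
  have hsub : D.image (fun c => c ^ (t - 1)) ⊆
      Finset.univ.filter fun x : K => x ^ (t + 1) = 1 := by
    intro y hy
    rcases Finset.mem_image.mp hy with ⟨c, hc, rfl⟩
    rw [hD, Finset.mem_filter] at hc
    rw [Finset.mem_filter]
    refine ⟨Finset.mem_univ _, ?_⟩
    rw [← pow_mul]
    have harith : (t - 1) * (t + 1) = t ^ 2 - 1 := by
      rw [t2_help ht, mul_comm]
    rw [harith, ← hcK, FiniteField.pow_card_sub_one_eq_one _ hc.2]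
  have hVle := card_pow_eq_one_le (K := K) (m := t + 1) (by omega)
  have hIm := Finset.card_le_card hsub
  -- arithmetic: hgc : t^2 - 1 = imcard * (t-1); imcard ≤ cardV ≤ t+1
  rw [hDcard, t2_help ht] at hgc
  have himeq : (D.image (fun c => c ^ (t - 1))).card = t + 1 :=
    Nat.eq_of_mul_eq_mul_right (by omega) hgc.symm
  omega

include ht hct hcK in
lemma mu_image [DecidableEq K] [DecidableEq Ft] :
    (Finset.univ.filter (fun c : K => c ≠ 0)).image (fun c => c ^ (t + 1)) =
      (Finset.univ.filter (fun e : Ft => e ≠ 0)).image (algebraMap Ft K) := by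
  classical
  set D : Finset K := Finset.univ.filter (fun c : K => c ≠ 0) with hD
  have hDcard : D.card = t ^ 2 - 1 := by
    rw [hD, Finset.filter_ne', Finset.card_erase_of_mem (Finset.mem_univ _),
      Finset.card_univ, hcK]
  have hgc := group_count D (fun c => c ^ (t + 1)) (t + 1) ?fib
  case fib =>
    intro y hy
    rcases Finset.mem_image.mp hy with ⟨c₀, hc₀, rfl⟩
    rw [hD, Finset.mem_filter] at hc₀
    rw [hD, fiber_card_eq (by omega : 0 < t + 1) hc₀.2]
    exact card_subV ht hct hcK
  set I : Finset K :=
    (Finset.univ.filter (fun e : Ft => e ≠ 0)).image (algebraMap Ft K) with hI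
  have hIcard : I.card = t - 1 := by
    rw [hI, Finset.card_image_of_injective _ aM_inj, Finset.filter_ne',
      Finset.card_erase_of_mem (Finset.mem_univ _), Finset.card_univ, hct]
  have hsub : D.image (fun c => c ^ (t + 1)) ⊆ I := by
    intro y hy
    rcases Finset.mem_image.mp hy with ⟨c, hc, rfl⟩
    rw [hD, Finset.mem_filter] at hc
    have hfix : (c ^ (t + 1)) ^ t = c ^ (t + 1) := by
      rw [← pow_mul]
      have : (t + 1) * t = t ^ 2 + t := by ring
      rw [this, pow_add, K_pow_t2 hcK]
      ring
    rcases mem_range_of_pow_t ht hct hfix with ⟨e, he⟩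
    have he0 : e ≠ 0 := by
      intro h
      rw [h, map_zero] at he
      exact pow_ne_zero (t+1) hc.2 he.symm
    rw [hI]
    exact Finset.mem_image.mpr ⟨e, Finset.mem_filter.mpr ⟨Finset.mem_univ _, he0⟩, he⟩
  rw [hDcard, t2_help ht, mul_comm (t+1) (t-1)] at hgc
  have himeq : (D.image (fun c => c ^ (t + 1))).card = t - 1 :=
    Nat.eq_of_mul_eq_mul_right (by omega) hgc.symm
  exact Finset.eq_of_subset_of_card_le hsub (by omega)

end Sub2

section Sub3

variable {p t : ℕ} [Fact p.Prime] (ht : 2 ≤ t)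
variable {Ft K : Type} [Field Ft] [Field K] [Fintype Ft] [Fintype K]
  [Algebra Ft K] [Algebra (ZMod p) Ft]
  (hct : Fintype.card Ft = t) (hcK : Fintype.card K = t ^ 2)

noncomputable def rinvK (Ft K : Type) [Field Ft] [Field K] [Algebra Ft K] : K → Ft :=
  Function.invFun (algebraMap Ft K)

lemma rinvK_aM (c : Ft) : rinvK Ft K (algebraMap Ft K c) = c :=
  Function.leftInverse_invFun (aM_inj (Ft := Ft) (K := K)) c

include ht hct in
lemma aM_rinvK {k : K} (hk : k ^ t = k) : algebraMap Ft K (rinvK Ft K k) = k := by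
  rcases mem_range_of_pow_t ht hct hk with ⟨c, rfl⟩
  rw [rinvK_aM]

lemma rinvK_zero : rinvK Ft K 0 = 0 := by
  rw [show (0 : K) = algebraMap Ft K 0 by rw [map_zero], rinvK_aM]

include ht hct in
lemma phi_mul (b : Ft) {x y : K} (hx : x ^ t = x) (hy : y ^ t = y) :
    psiF p Ft (b * rinvK Ft K (x + y)) =
      psiF p Ft (b * rinvK Ft K x) * psiF p Ft (b * rinvK Ft K y) := by
  rcases mem_range_of_pow_t ht hct hx with ⟨x', rfl⟩
  rcases mem_range_of_pow_t ht hct hy with ⟨y', rfl⟩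
  rw [← map_add, rinvK_aM, rinvK_aM, rinvK_aM, mul_add, psiF_add]

include ht hct hcK in
lemma norm_sum {b : Ft} (hb : b ≠ 0) {d : K} (hd : d ≠ 0) (hdt : d ^ t = d) :
    ∑ c : K, psiF p Ft (b * rinvK Ft K (c ^ (t + 1) * d)) = -(t : ℂ) := by
  classical
  have hzero : psiF p Ft (b * rinvK Ft K ((0 : K) ^ (t + 1) * d)) = 1 := by
    rw [zero_pow (by omega : t + 1 ≠ 0), zero_mul, rinvK_zero, mul_zero, psiF_zero]
  set D : Finset K := Finset.univ.filter (fun c : K => c ≠ 0) with hD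
  have hsplit : ∑ c : K, psiF p Ft (b * rinvK Ft K (c ^ (t + 1) * d))
      = 1 + ∑ c ∈ D, psiF p Ft (b * rinvK Ft K (c ^ (t + 1) * d)) := by
    rw [hD, Finset.filter_ne', ← Finset.sum_erase_add _ _ (Finset.mem_univ (0 : K)),
      hzero, add_comm]
  rw [hsplit]
  -- group the D-sum by fibers of c ↦ c ^ (t+1)
  have hgroup : ∑ c ∈ D, psiF p Ft (b * rinvK Ft K (c ^ (t + 1) * d))
      = ∑ y ∈ D.image (fun c => c ^ (t + 1)),
          ∑ c ∈ D.filter (fun c => c ^ (t + 1) = y),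
            psiF p Ft (b * rinvK Ft K (c ^ (t + 1) * d)) :=
    (Finset.sum_fiberwise_of_maps_to (fun x hx => Finset.mem_image_of_mem _ hx) _).symm
  rw [hgroup]
  have hfibsum : ∀ y ∈ D.image (fun c => c ^ (t + 1)),
      ∑ c ∈ D.filter (fun c => c ^ (t + 1) = y),
          psiF p Ft (b * rinvK Ft K (c ^ (t + 1) * d))
        = (t + 1 : ℂ) * psiF p Ft (b * rinvK Ft K (y * d)) := by
    intro y hy
    rcases Finset.mem_image.mp hy with ⟨c₀, hc₀, rfl⟩
    rw [hD, Finset.mem_filter] at hc₀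
    have hcongr : ∀ c ∈ D.filter (fun c => c ^ (t + 1) = c₀ ^ (t + 1)),
        psiF p Ft (b * rinvK Ft K (c ^ (t + 1) * d))
          = psiF p Ft (b * rinvK Ft K (c₀ ^ (t + 1) * d)) := by
      intro c hc
      rw [Finset.mem_filter] at hc
      rw [hc.2]
    rw [Finset.sum_congr rfl hcongr, Finset.sum_const, nsmul_eq_mul]
    congr 1
    rw [hD, fiber_card_eq (by omega : 0 < t + 1) hc₀.2, card_subV ht hct hcK]
    push_cast; ring
  rw [Finset.sum_congr rfl hfibsum, ← Finset.mul_sum, hD, mu_image ht hct hcK,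
    Finset.sum_image (fun a _ a' _ h => aM_inj (Ft := Ft) (K := K) h)]
  set d' : Ft := rinvK Ft K d with hd'
  have hdd : algebraMap Ft K d' = d := aM_rinvK ht hct hdt
  have hterm : ∀ e ∈ Finset.univ.filter (fun e : Ft => e ≠ 0),
      psiF p Ft (b * rinvK Ft K (algebraMap Ft K e * d)) = psiF p Ft ((b * d') * e) := by
    intro e _
    rw [← hdd, ← map_mul, rinvK_aM]
    ring_nf
  rw [Finset.sum_congr rfl hterm]
  have hbd : b * d' ≠ 0 := by
    apply mul_ne_zero hb
    intro h
    rw [h, map_zero] at hdd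
    exact hd hdd.symm
  have hfull : ∑ e : Ft, psiF p Ft ((b * d') * e) = 0 := psiF_mul_sum hbd
  have hsplit2 : ∑ e ∈ Finset.univ.filter (fun e : Ft => e ≠ 0),
      psiF p Ft ((b * d') * e) = -1 := by
    rw [Finset.filter_ne']
    have := Finset.sum_erase_add Finset.univ
      (fun e : Ft => psiF p Ft ((b * d') * e)) (Finset.mem_univ (0 : Ft))
    simp only [mul_zero, psiF_zero] at this
    rw [hfull] at this
    linear_combination this
  rw [hsplit2]
  push_cast; ring

end Sub3

section Herm

variable {t : ℕ} {K : Type} [Field K] [Fintype K]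

lemma H_zero_left {N : ℕ} {H : (Fin N → K) → (Fin N → K) → K}
    (hH : IsSesquiHermitian t H) (y : Fin N → K) : H 0 y = 0 := by
  have := hH.1 0 0 y
  rw [add_zero] at this
  linear_combination -this

lemma H_zero_right {N : ℕ} {H : (Fin N → K) → (Fin N → K) → K}
    (hH : IsSesquiHermitian t H) (y : Fin N → K) : H y 0 = 0 := by
  have := hH.2.1 y 0 0
  rw [add_zero] at this
  linear_combination -this

lemma exists_nonfix (ht : 2 ≤ t) {Ft : Type} [Field Ft] [Fintype Ft] [Algebra Ft K]
    (hct : Fintype.card Ft = t) (hcK : Fintype.card K = t ^ 2) :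
    ∃ c : K, c ^ t ≠ c := by
  by_contra hall
  push_neg at hall
  have hsurj : Function.Surjective (algebraMap Ft K) := by
    intro k
    exact mem_range_of_pow_t ht hct (hall k)
  have := Fintype.card_le_of_surjective _ hsurj
  rw [hct, hcK] at this
  nlinarith

lemma polarize (ht : 2 ≤ t) {Ft : Type} [Field Ft] [Fintype Ft] [Algebra Ft K]
    (hct : Fintype.card Ft = t) (hcK : Fintype.card K = t ^ 2)
    {N : ℕ} {H : (Fin N → K) → (Fin N → K) → K}
    (hH : IsSesquiHermitian t H) (h0 : ∀ z, H z z = 0) :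
    ∀ z w, H z w = 0 := by
  have hsum : ∀ z w, H z w + H w z = 0 := by
    intro z w
    have := h0 (z + w)
    rw [hH.1 z w (z+w), hH.2.1 z z w, hH.2.1 w z w, h0 z, h0 w] at this
    linear_combination this
  intro z w
  obtain ⟨c, hc⟩ := exists_nonfix ht hct hcK (Ft := Ft)
  have h1 := hsum (c • z) w
  rw [hH.2.2.1 c z w] at h1
  have h2 : H w (c • z) = c * H w z := hH.2.2.2.1 c w z
  rw [h2] at h1
  have h3 : H w z = - H z w := by linear_combination hsum z w
  rw [h3] at h1
  have h4 : (c ^ t - c) * H z w = 0 := by linear_combination h1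
  rcases mul_eq_zero.mp h4 with h | h
  · exact absurd (by linear_combination h) hc
  · exact h

lemma pow_t1_fixed (hcK : Fintype.card K = t ^ 2) (c : K) :
    (c ^ (t + 1)) ^ t = c ^ (t + 1) := by
  rw [← pow_mul]
  have : (t + 1) * t = t ^ 2 + t := by ring
  rw [this, pow_add, K_pow_t2 hcK]
  ring

lemma full_of_natcard {α : Type} [Fintype α] {P : α → Prop}
    (h : Nat.card {z : α // P z} = Fintype.card α) : ∀ z, P z := by
  classical
  rw [Nat.card_eq_fintype_card, Fintype.card_subtype] at h
  have heq := Finset.eq_univ_of_card _ h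
  intro z
  have hz : z ∈ Finset.univ.filter (fun x => P x) := by
    rw [heq]; exact Finset.mem_univ z
  exact (Finset.mem_filter.mp hz).2

end Herm

section MainInd

variable {p t : ℕ} [Fact p.Prime]
variable {Ft K : Type} [Field Ft] [Field K] [Fintype Ft] [Fintype K]
  [Algebra Ft K] [Algebra (ZMod p) Ft]

theorem herm_sum (ht : 2 ≤ t) (hct : Fintype.card Ft = t) (hcK : Fintype.card K = t ^ 2)
    {b : Ft} (hb : b ≠ 0) :
    ∀ (n ρ : ℕ) (H : (Fin n → K) → (Fin n → K) → K), IsSesquiHermitian t H →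
      ρ ≤ n → Nat.card {z : Fin n → K // ∀ w, H w z = 0} = t ^ (2 * (n - ρ)) →
      ∑ z : Fin n → K, psiF p Ft (b * rinvK Ft K (H z z)) =
        (-1 : ℂ) ^ ρ * (t : ℂ) ^ (2 * n - ρ) := by
  intro n
  induction n with
  | zero =>
    intro ρ H hH hρ _
    interval_cases ρ
    have hz : ∀ z : Fin 0 → K, H z z = 0 := by
      intro z
      have : z = 0 := funext (fun i => absurd i.isLt (by omega))
      rw [this]
      exact H_zero_left hH 0
    rw [Fintype.sum_congr _ _ (fun z => by rw [hz z, rinvK_zero, mul_zero, psiF_zero])]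
    simp
  | succ n IH =>
    intro ρ H hH hρ hrad
    classical
    by_cases hρ0 : ρ = 0
    · subst hρ0
      have hcard : Nat.card {z : Fin (n+1) → K // ∀ w, H w z = 0}
          = Fintype.card (Fin (n+1) → K) := by
      -- card = (t^2)^(n+1) = t^(2(n+1))
        rw [hrad, Fintype.card_fun, hcK, Fintype.card_fin, ← pow_mul]
        congr 1 <;> omega
      have hall := full_of_natcard hcard
      have hzz : ∀ z : Fin (n+1) → K, H z z = 0 := fun z => hall z z
      rw [Fintype.sum_congr _ _ (fun z => by rw [hzz z, rinvK_zero, mul_zero, psiF_zero])]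
      rw [Finset.sum_const, Finset.card_univ, Fintype.card_fun, hcK, Fintype.card_fin]
      rw [nsmul_eq_mul, mul_one, Nat.sub_zero, ← pow_mul]
      push_cast
      rw [mul_comm 2 (n+1)]
      simp
    · obtain ⟨σ, rfl⟩ : ∃ σ, ρ = σ + 1 := ⟨ρ - 1, by omega⟩
      -- find an anisotropic vector
      have hex : ∃ z₀ : Fin (n+1) → K, H z₀ z₀ ≠ 0 := by
        by_contra hno
        push_neg at hno
        have hallz := polarize ht hct hcK hH hno
        have : Nat.card {z : Fin (n+1) → K // ∀ w, H w z = 0}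
            = Fintype.card (Fin (n+1) → K) :=
          (Nat.card_congr (Equiv.subtypeUnivEquiv (fun z w => hallz w z))).trans
            Nat.card_eq_fintype_card
        rw [hrad, Fintype.card_fun, hcK, Fintype.card_fin, ← pow_mul] at this
        have := Nat.pow_right_injective ht this
        omega
      obtain ⟨z₀, hz₀⟩ := hex
      set d : K := H z₀ z₀ with hd
      have hdt : d ^ t = d := (hH.2.2.2.2 z₀ z₀).symm
      -- the linear functional φ = H z₀ ·
      set φ : (Fin (n+1) → K) →ₗ[K] K :=
        { toFun := H z₀,
          map_add' := fun x y => hH.2.1 z₀ x y,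
          map_smul' := fun c x => hH.2.2.2.1 c z₀ x } with hφ
      have hφz₀ : φ z₀ = d := rfl
      have hφsurj : Function.Surjective φ := by
        intro k
        refine ⟨(k / d) • z₀, ?_⟩
        show H z₀ ((k / d) • z₀) = k
        rw [hH.2.2.2.1, ← hd, div_mul_cancel₀ _ hz₀]
      have hkerrank : Module.finrank K (LinearMap.ker φ) = n := by
        have h1 := LinearMap.finrank_range_add_finrank_ker φ
        rw [LinearMap.range_eq_top.mpr hφsurj, finrank_top, Module.finrank_self,
          Module.finrank_pi] at h1
        simp only [Fintype.card_fin] at h1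
        omega
      obtain ⟨e⟩ : Nonempty ((Fin n → K) ≃ₗ[K] LinearMap.ker φ) := by
        apply FiniteDimensional.nonempty_linearEquiv_of_finrank_eq
        rw [Module.finrank_pi, hkerrank, Fintype.card_fin]
      -- the decomposition equiv
      set Ef : K × (Fin n → K) → (Fin (n+1) → K) :=
        fun cx => cx.1 • z₀ + (e cx.2 : Fin (n+1) → K) with hEf
      have hEinj : Function.Injective Ef := by
        rintro ⟨c, x⟩ ⟨c', x'⟩ hcc
        simp only [hEf] at hcc
        have hphi := congrArg φ hcc
        rw [map_add, map_add, map_smul, map_smul, hφz₀,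
          (LinearMap.mem_ker.mp (e x).2 : φ (e x : Fin (n+1) → K) = 0),
          (LinearMap.mem_ker.mp (e x').2 : φ (e x' : Fin (n+1) → K) = 0)] at hphi
        simp only [smul_eq_mul, add_zero] at hphi
        have hc : c = c' := mul_right_cancel₀ hz₀ hphi
        subst hc
        have := add_left_cancel hcc
        have hsub : e x = e x' := Subtype.ext this
        exact Prod.ext rfl (e.injective hsub)
      have hEbij : Function.Bijective Ef := by
        rw [Fintype.bijective_iff_injective_and_card]
        refine ⟨hEinj, ?_⟩
        rw [Fintype.card_prod, Fintype.card_fun, Fintype.card_fun, Fintype.card_fin,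
          Fintype.card_fin]
        ring
      set E : (K × (Fin n → K)) ≃ (Fin (n+1) → K) := Equiv.ofBijective Ef hEbij with hE
      -- H' on the smaller space
      set H' : (Fin n → K) → (Fin n → K) → K :=
        fun x y => H (e x : Fin (n+1) → K) (e y : Fin (n+1) → K) with hH'
      have hH'herm : IsSesquiHermitian t H' := by
        refine ⟨?_, ?_, ?_, ?_, ?_⟩
        · intro x x' y
          simp only [hH', map_add, Submodule.coe_add]
          exact hH.1 _ _ _
        · intro x y y'
          simp only [hH', map_add, Submodule.coe_add]
          exact hH.2.1 _ _ _
        · intro c x y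
          simp only [hH', map_smul, SetLike.val_smul]
          exact hH.2.2.1 _ _ _
        · intro c x y
          simp only [hH', map_smul, SetLike.val_smul]
          exact hH.2.2.2.1 _ _ _
        · intro x y
          exact hH.2.2.2.2 _ _
      -- key facts about the kernel
      have hker0 : ∀ x : Fin n → K, H z₀ (e x : Fin (n+1) → K) = 0 :=
        fun x => LinearMap.mem_ker.mp (e x).2
      have hker0' : ∀ x : Fin n → K, H (e x : Fin (n+1) → K) z₀ = 0 := by
        intro x
        rw [hH.2.2.2.2 (e x : Fin (n+1) → K) z₀, hker0 x]
        exact zero_pow (by omega : t ≠ 0)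
      -- expansion of H on the decomposition
      have hexp : ∀ (c : K) (x : Fin n → K),
          H (Ef (c, x)) (Ef (c, x)) = c ^ (t + 1) * d + H' x x := by
        intro c x
        simp only [hEf]
        have e1 : H (c • z₀ + (e x : Fin (n+1) → K)) (c • z₀ + (e x : Fin (n+1) → K))
            = H (c • z₀) (c • z₀) + H (c • z₀) (e x : Fin (n+1) → K)
              + (H (e x : Fin (n+1) → K) (c • z₀)
                + H (e x : Fin (n+1) → K) (e x : Fin (n+1) → K)) := by
          rw [hH.1, hH.2.1 (c • z₀), hH.2.1 ((e x : Fin (n+1) → K))]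
        rw [e1, hH.2.2.1 c z₀ ((e x : Fin (n+1) → K)),
          hH.2.2.2.1 c ((e x : Fin (n+1) → K)) z₀, hker0 x, hker0' x,
          hH.2.2.1 c z₀ (c • z₀), hH.2.2.2.1 c z₀ z₀, ← hd, hH']
        ring
      -- radical correspondence
      have hradcorr : Nat.card {x : Fin n → K // ∀ y, H' y x = 0}
          = Nat.card {z : Fin (n+1) → K // ∀ w, H w z = 0} := by
        apply Nat.card_congr
        refine Equiv.ofBijective (fun x => ⟨(e x.1 : Fin (n+1) → K), ?_⟩) ⟨?_, ?_⟩
        · intro w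
          obtain ⟨⟨c, y⟩, rfl⟩ := hEbij.2 w
          simp only [hEf]
          rw [hH.1, hH.2.2.1, hker0]
          have : H (e y : Fin (n+1) → K) (e x.1 : Fin (n+1) → K) = 0 := x.2 y
          rw [this, mul_zero, add_zero]
        · rintro ⟨x, hx⟩ ⟨x', hx'⟩ hxx
          simp only [Subtype.mk.injEq] at hxx
          exact Subtype.ext (e.injective (Subtype.ext hxx))
        · rintro ⟨z, hz⟩
          have hzker : z ∈ LinearMap.ker φ := LinearMap.mem_ker.mpr (hz z₀)
          refine ⟨⟨e.symm ⟨z, hzker⟩, ?_⟩, ?_⟩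
          · intro y
            show H (e y : Fin (n+1) → K) _ = 0
            rw [e.apply_symm_apply]
            exact hz _
          · apply Subtype.ext
            show ((e (e.symm ⟨z, hzker⟩) : LinearMap.ker φ) : Fin (n+1) → K) = z
            rw [e.apply_symm_apply]
      have hrad' : Nat.card {x : Fin n → K // ∀ y, H' y x = 0} = t ^ (2 * (n - σ)) := by
        rw [hradcorr, hrad]
        congr 1
        omega
      have hσn : σ ≤ n := by omega
      -- the sum
      have hIH := IH σ H' hH'herm hσn hrad'
      rw [← Equiv.sum_comp E (fun z => psiF p Ft (b * rinvK Ft K (H z z)))]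
      have hEeq : ∀ cx : K × (Fin n → K), E cx = Ef cx := fun cx => rfl
      rw [Fintype.sum_prod_type]
      have hterm : ∀ (c : K) (x : Fin n → K),
          psiF p Ft (b * rinvK Ft K (H (E (c, x)) (E (c, x))))
            = psiF p Ft (b * rinvK Ft K (c ^ (t + 1) * d)) *
              psiF p Ft (b * rinvK Ft K (H' x x)) := by
        intro c x
        rw [hEeq, hexp]
        apply phi_mul ht hct
        · rw [mul_pow, pow_t1_fixed hcK, hdt]
        · exact (hH'herm.2.2.2.2 x x).symm
      rw [Finset.sum_congr rfl (fun c _ => Finset.sum_congr rfl (fun x _ => hterm c x))]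
      rw [← Finset.sum_mul_sum]
      rw [norm_sum ht hct hcK hb hz₀ hdt, hIH]
      have hexp2 : 2 * (n + 1) - (σ + 1) = (2 * n - σ) + 1 := by omega
      rw [hexp2, pow_succ, pow_succ]
      ring

end MainInd


/-- For a quadratic hermitian form `f` of rank `2ρ` on `F_t^{2N}` and `v = T(u) ∈ Im T`,
`∑_{a ∈ F_s^*} S(af, v) = (−1)^ρ t^{2N−ρ} A(s,v)`, where `A(s,v) = s − 1` if
`Tr_{F_t/F_s}(f(u)) = 0` and `A(s,v) = −1` otherwise. -/
theorem stmt_15 (p s t N ρ : ℕ) [Fact p.Prime] (hpodd : p ≠ 2)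
    (hN : 1 ≤ N) (hρ1 : 1 ≤ ρ) (hρN : ρ ≤ N)
    (Fs Ft K : Type) [Field Fs] [Field Ft] [Field K]
    [Fintype Fs] [Fintype Ft] [Fintype K] [DecidableEq Fs] [DecidableEq Ft]
    [Algebra (ZMod p) Fs] [Algebra (ZMod p) Ft] [Algebra Fs Ft] [Algebra Ft K]
    [IsScalarTower (ZMod p) Fs Ft]
    (hcs : Fintype.card Fs = s) (hct : Fintype.card Ft = t)
    (hcK : Fintype.card K = t ^ 2)
    (H : (Fin N → K) → (Fin N → K) → K) (hH : IsSesquiHermitian t H)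
    (α : K) (hα : Algebra.adjoin Ft ({α} : Set K) = ⊤)
    (f : (Fin (2 * N) → Ft) → Ft)
    (hf : ∀ x, algebraMap Ft K (f x) = H (iota N Ft K α x) (iota N Ft K α x))
    (B : (Fin (2 * N) → Ft) → (Fin (2 * N) → Ft) → Ft)
    (hB : ∀ x y, B x y = f (x + y) - f x - f y)
    (W : Submodule Ft (Fin (2 * N) → Ft)) (hW : ∀ x, x ∈ W ↔ ∀ y, B x y = 0)
    (hrk : 2 * N - Module.finrank Ft W = 2 * ρ)
    (T : (Fin (2 * N) → Ft) →ₗ[Ft] (Fin (2 * N) → Ft))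
    (hT : ∀ x y, B x y = ∑ i, T x i * y i)
    (ψ : Ft → ℂ)
    (hψ : ∀ z, ψ z = Complex.exp
      (2 * Real.pi * Complex.I * ((Algebra.trace (ZMod p) Ft z).val : ℂ) / p))
    (u v : Fin (2 * N) → Ft) (hv : T u = v) :
    ∑ a : Fsˣ, (∑ x : Fin (2 * N) → Ft,
        ψ (algebraMap Fs Ft (a : Fs) * f x + ∑ i, v i * x i)) =
      (-1 : ℂ) ^ ρ * (t : ℂ) ^ (2 * N - ρ) *
        (if Algebra.trace Fs Ft (f u) = 0 then (s : ℂ) - 1 else -1) := by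
  classical
  have hψ' : ψ = psiF p Ft := psiF_eq p Ft ψ hψ
  subst hψ'
  have ht : 2 ≤ t := by
    rw [← hct]
    exact Fintype.one_lt_card
  set ι : (Fin (2 * N) → Ft) → (Fin N → K) := iota N Ft K α with hι
  -- α is not in the base field
  have halpha : α ∉ Set.range (algebraMap Ft K) := by
    rintro ⟨c, hc⟩
    have hbot : Algebra.adjoin Ft ({α} : Set K) ≤ ⊥ := by
      apply Algebra.adjoin_le
      rw [Set.singleton_subset_iff]
      exact Algebra.mem_bot.mpr ⟨c, hc⟩
    have hsurj : Function.Surjective (algebraMap Ft K) := by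
      intro k
      have : k ∈ Algebra.adjoin Ft ({α} : Set K) := hα ▸ Algebra.mem_top
      exact Algebra.mem_bot.mp (hbot this)
    have := Fintype.card_le_of_surjective _ hsurj
    rw [hct, hcK] at this
    nlinarith
  -- ι is additive and `Ft`-homogeneous
  have hι_add : ∀ x y, ι (x + y) = ι x + ι y := by
    intro x y
    funext i
    simp only [hι, iota, Pi.add_apply, map_add]
    ring
  have hι_smul : ∀ (c : Ft) x, ι (c • x) = algebraMap Ft K c • ι x := by
    intro c x
    funext i
    simp only [hι, iota, Pi.smul_apply, smul_eq_mul, map_mul]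
    ring
  have hι_sub : ∀ x y, ι (x - y) = ι x - ι y := by
    intro x y
    funext i
    simp only [hι, iota, Pi.sub_apply, map_sub]
    ring
  -- ι is injective
  have hι_zero : ∀ x, ι x = 0 → x = 0 := by
    intro x hx
    have hpair : ∀ i : Fin N, x ⟨2 * i.1, by have := i.isLt; omega⟩ = 0 ∧
        x ⟨2 * i.1 + 1, by have := i.isLt; omega⟩ = 0 := by
      intro i
      have hcoord := congrFun hx i
      simp only [hι, iota, Pi.zero_apply] at hcoord
      by_cases h1 : x ⟨2 * i.1 + 1, by have := i.isLt; omega⟩ = 0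
      · rw [h1, map_zero, zero_mul, add_zero] at hcoord
        exact ⟨(map_eq_zero (algebraMap Ft K)).mp hcoord, h1⟩
      · exfalso
        apply halpha
        refine ⟨-(x ⟨2 * i.1, by have := i.isLt; omega⟩) /
          (x ⟨2 * i.1 + 1, by have := i.isLt; omega⟩), ?_⟩
        rw [map_div₀, map_neg]
        have hb0 : algebraMap Ft K (x ⟨2 * i.1 + 1, by have := i.isLt; omega⟩) ≠ 0 := by
          rw [map_ne_zero_iff _ (algebraMap Ft K).injective]
          exact h1
        field_simp
        linear_combination -hcoord
    funext j
    have hjlt := j.isLt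
    rcases Nat.even_or_odd j.1 with he | ho
    · obtain ⟨m, hm⟩ := he
      have hmlt : m < N := by omega
      have hj : j = (⟨2 * (⟨m, hmlt⟩ : Fin N).1, by omega⟩ : Fin (2 * N)) :=
        Fin.ext (show j.1 = 2 * m by omega)
      rw [hj]
      exact (hpair ⟨m, hmlt⟩).1
    · obtain ⟨m, hm⟩ := ho
      have hmlt : m < N := by omega
      have hj : j = (⟨2 * (⟨m, hmlt⟩ : Fin N).1 + 1, by omega⟩ : Fin (2 * N)) :=
        Fin.ext (show j.1 = 2 * m + 1 by omega)
      rw [hj]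
      exact (hpair ⟨m, hmlt⟩).2
  have hι_inj : Function.Injective ι := by
    intro x y hxy
    have : ι (x - y) = 0 := by rw [hι_sub, hxy, sub_self]
    have := hι_zero _ this
    exact sub_eq_zero.mp this
  have hι_bij : Function.Bijective ι := by
    rw [Fintype.bijective_iff_injective_and_card]
    refine ⟨hι_inj, ?_⟩
    rw [Fintype.card_fun, Fintype.card_fun, Fintype.card_fin, Fintype.card_fin,
      hct, hcK, ← pow_mul]
  set ιE : (Fin (2 * N) → Ft) ≃ (Fin N → K) := Equiv.ofBijective ι hι_bij with hιE
  -- quadratic form facts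
  have hBH : ∀ x y, algebraMap Ft K (B x y) = H (ι x) (ι y) + H (ι y) (ι x) := by
    intro x y
    rw [hB, map_sub, map_sub, hf, hf, hf, hι_add x y, hH.1, hH.2.1, hH.2.1]
    ring
  have hf_smul : ∀ (c : Ft) x, f (c • x) = c ^ 2 * f x := by
    intro c x
    apply (algebraMap Ft K).injective
    rw [hf, hι_smul, hH.2.2.1, hH.2.2.2.1, aM_pow_t hct, ← hf, map_mul, map_pow]
    ring
  have hf_add : ∀ x y, f (x + y) = f x + f y + B x y := by
    intro x y; rw [hB]; ring
  have hB_symm : ∀ x y, B x y = B y x := by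
    intro x y; rw [hB, hB, add_comm x y]; ring
  have hB_smul : ∀ (c : Ft) x y, B x (c • y) = c * B x y := by
    intro c x y
    rw [hT, hT, Finset.mul_sum]
    apply Finset.sum_congr rfl
    intro i _
    rw [Pi.smul_apply, smul_eq_mul]; ring
  have hBu : ∀ x, B u x = ∑ i, v i * x i := by
    intro x
    rw [hT, hv]
  have hvu : ∑ i, v i * u i = 2 * f u := by
    have huu : u + u = (2 : Ft) • u := by
      funext i
      rw [Pi.add_apply, Pi.smul_apply, smul_eq_mul, two_mul]
    have h1 : B u u = 2 * f u := by
      rw [hB, huu, hf_smul]; ring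
    rw [← hBu u, h1]
  -- rank translation
  have hmem : ∀ x, x ∈ W ↔ ∀ w : Fin N → K, H w (ι x) = 0 := by
    intro x
    rw [hW]
    constructor
    · intro hall w
      have hstar : ∀ w : Fin N → K, H (ι x) w + H w (ι x) = 0 := by
        intro w
        obtain ⟨y, rfl⟩ := hι_bij.2 w
        have h2 := hBH x y
        rw [hall y, map_zero] at h2
        linear_combination -h2
      obtain ⟨c, hc⟩ := exists_nonfix ht hct hcK (Ft := Ft) (K := K)
      have h1 := hstar (c • w)
      rw [hH.2.2.2.1 c (ι x) w, hH.2.2.1 c w (ι x)] at h1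
      have h2 := hstar w
      have h4 : (c ^ t - c) * H w (ι x) = 0 := by linear_combination h1 - c * h2
      rcases mul_eq_zero.mp h4 with h | h
      · exact absurd (by linear_combination h) hc
      · exact h
    · intro hall y
      apply (algebraMap Ft K).injective
      rw [hBH, map_zero]
      have h1 := hall (ι y)
      have h2 : H (ι x) (ι y) = 0 := by
        rw [hH.2.2.2.2 (ι x) (ι y), h1]
        exact zero_pow (by omega : t ≠ 0)
      rw [h1, h2, add_zero]
  have hradW : Nat.card {z : Fin N → K // ∀ w, H w z = 0} = Nat.card W := by
    apply Nat.card_congr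
    exact (Equiv.subtypeEquiv ιE (fun x => hmem x)).symm
  have hfrW : Module.finrank Ft W = 2 * N - 2 * ρ := by
    have hle : Module.finrank Ft W ≤ 2 * N := by
      have h1 := Submodule.finrank_le W
      rwa [Module.finrank_pi, Fintype.card_fin] at h1
    omega
  have hradcard : Nat.card {z : Fin N → K // ∀ w, H w z = 0} = t ^ (2 * (N - ρ)) := by
    letI : Fintype ↥W := Fintype.ofFinite _
    rw [hradW, Nat.card_eq_fintype_card, Module.card_eq_pow_finrank (K := Ft) (V := ↥W), hct, hfrW]
    congr 1
    omega
  -- the Gauss sum for each nonzero multiplier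
  have hsum_b : ∀ b : Ft, b ≠ 0 → ∑ x : Fin (2 * N) → Ft, psiF p Ft (b * f x)
      = (-1 : ℂ) ^ ρ * (t : ℂ) ^ (2 * N - ρ) := by
    intro b hb
    have hkey := herm_sum (p := p) ht hct hcK hb N ρ H hH hρN hradcard
    rw [← hkey, ← Equiv.sum_comp ιE (fun z => psiF p Ft (b * rinvK Ft K (H z z)))]
    apply Finset.sum_congr rfl
    intro x _
    have hEx : ιE x = ι x := rfl
    rw [hEx, ← hf, rinvK_aM]
  -- the inner sum for each unit a
  have hinner : ∀ a : Fsˣ,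
      (∑ x : Fin (2 * N) → Ft,
        psiF p Ft (algebraMap Fs Ft (a : Fs) * f x + ∑ i, v i * x i))
        = psiF p Ft (-(algebraMap Fs Ft (a : Fs))⁻¹ * f u) *
            ((-1 : ℂ) ^ ρ * (t : ℂ) ^ (2 * N - ρ)) := by
    intro a
    set b : Ft := algebraMap Fs Ft (a : Fs) with hbdef
    have hb : b ≠ 0 := by
      rw [hbdef]
      rw [map_ne_zero_iff _ (algebraMap Fs Ft).injective]
      exact Units.ne_zero a
    set w : Fin (2 * N) → Ft := b⁻¹ • u with hwdef
    have hre : (∑ x : Fin (2 * N) → Ft, psiF p Ft (b * f x + ∑ i, v i * x i))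
        = ∑ x : Fin (2 * N) → Ft, psiF p Ft (b * f (x - w) + ∑ i, v i * (x - w) i) :=
      (Equiv.sum_comp (Equiv.subRight w)
        (fun x => psiF p Ft (b * f x + ∑ i, v i * x i))).symm
    rw [hre]
    have hpt : ∀ x : Fin (2 * N) → Ft, b * f (x - w) + ∑ i, v i * (x - w) i
        = (b * f x) + (-(b⁻¹) * f u) := by
      intro x
      have h1 : f (x - w) = f x + (b⁻¹) ^ 2 * f u + (-(b⁻¹)) * B x u := by
        have hxw : x - w = x + (-(b⁻¹)) • u := by
          funext i
          rw [Pi.sub_apply, Pi.add_apply, Pi.smul_apply, hwdef, Pi.smul_apply]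
          rw [smul_eq_mul, smul_eq_mul]
          ring
        rw [hxw, hf_add, hB_smul]
        have hnu : f ((-(b⁻¹)) • u) = (b⁻¹) ^ 2 * f u := by
          rw [hf_smul]; ring
        rw [hnu]
      have h2 : ∑ i, v i * (x - w) i = (∑ i, v i * x i) - b⁻¹ * (2 * f u) := by
        have ha : ∑ i, v i * (x - w) i = (∑ i, v i * x i) - ∑ i, v i * w i := by
          rw [← Finset.sum_sub_distrib]
          apply Finset.sum_congr rfl
          intro i _
          rw [Pi.sub_apply]
          ring
        have hb2 : ∑ i, v i * w i = b⁻¹ * (2 * f u) := by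
          rw [hwdef]
          have : ∀ i, v i * (b⁻¹ • u) i = b⁻¹ * (v i * u i) := by
            intro i; rw [Pi.smul_apply, smul_eq_mul]; ring
          rw [Finset.sum_congr rfl (fun i _ => this i), ← Finset.mul_sum, hvu]
        rw [ha, hb2]
      rw [h1, h2]
      have hBxu : B x u = ∑ i, v i * x i := by rw [hB_symm, hBu]
      rw [hBxu]
      field_simp
      ring
    rw [Finset.sum_congr rfl (fun x _ => by rw [hpt x, psiF_add])]
    rw [← Finset.sum_mul, hsum_b b hb]
    ring
  rw [Finset.sum_congr rfl (fun a _ => hinner a), ← Finset.sum_mul]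
  -- reindex the unit sum by a ↦ -a⁻¹
  have hreidx : ∑ a : Fsˣ, psiF p Ft (-(algebraMap Fs Ft (a : Fs))⁻¹ * f u)
      = ∑ a : Fsˣ, psiF p Ft (algebraMap Fs Ft (a : Fs) * f u) := by
    rw [← Equiv.sum_comp ((Equiv.inv Fsˣ).trans (Equiv.neg Fsˣ))
      (fun a : Fsˣ => psiF p Ft (algebraMap Fs Ft (a : Fs) * f u))]
    apply Finset.sum_congr rfl
    intro a _
    have hval : ((((Equiv.inv Fsˣ).trans (Equiv.neg Fsˣ)) a : Fsˣ) : Fs)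
        = -((a : Fs))⁻¹ := by
      simp [Equiv.inv, Equiv.neg]
    rw [hval, map_neg, map_inv₀]
  rw [hreidx]
  -- pass to the subfield Fs
  have htr : ∀ a : Fsˣ, psiF p Ft (algebraMap Fs Ft (a : Fs) * f u)
      = psiF p Fs ((a : Fs) * Algebra.trace Fs Ft (f u)) := by
    intro a
    have htt : Algebra.trace (ZMod p) Ft (algebraMap Fs Ft (a : Fs) * f u)
        = Algebra.trace (ZMod p) Fs ((a : Fs) * Algebra.trace Fs Ft (f u)) := by
      rw [← Algebra.trace_trace (S := Fs) (x := algebraMap Fs Ft (a : Fs) * f u)]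
      congr 1
      rw [← Algebra.smul_def, map_smul, smul_eq_mul]
    simp only [psiF, htt]
  rw [Finset.sum_congr rfl (fun a _ => htr a)]
  rw [psiF_sum_units, hcs]
  ring
end

section
/- Let p be an odd prime, F_p ⊆ F_s ⊆ F_t ⊆ F_{t²} finite fields, N ≥ 1, a ∈ F_s, and f a quadratic hermitian form of rank 2ρ on F_t^{2N} with 1 ≤ ρ ≤ N. Then the number M of x ∈ F_t^{2N} satisfying Tr_{F_t/F_s}(f(x)) = a is: M = (1/s)(t^{2N} − (−1)^ρ t^{2N−ρ}) if a ≠ 0, and M = (1/s)(t^{2N} + (−1)^ρ (s−1) t^{2N−ρ}) if a = 0. -/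
open Finset in
lemma StmtAux.fixed_finset_eq {Ft K : Type} [Field Ft] [Field K] [Fintype Ft] [Fintype K]
    [DecidableEq K] [Algebra Ft K] {t : ℕ} (hct : Fintype.card Ft = t)
    (hcK : Fintype.card K = t ^ 2) :
    univ.image (algebraMap Ft K) = univ.filter (fun z : K => z ^ t = z) := by
  have ht : 1 < t := hct ▸ Fintype.one_lt_card
  have hne : (Polynomial.X ^ t - Polynomial.X : Polynomial K) ≠ 0 :=
    FiniteField.X_pow_card_sub_X_ne_zero K ht
  have hdeg : (Polynomial.X ^ t - Polynomial.X : Polynomial K).natDegree = t :=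
    FiniteField.X_pow_card_sub_X_natDegree_eq K ht
  have hsub : (univ.filter (fun z : K => z ^ t = z)) ⊆
      (Polynomial.X ^ t - Polynomial.X : Polynomial K).roots.toFinset := by
    intro z hz
    simp only [mem_filter] at hz
    rw [Multiset.mem_toFinset, Polynomial.mem_roots hne]
    simp [Polynomial.IsRoot, sub_eq_zero, hz.2]
  have hcard : (univ.filter (fun z : K => z ^ t = z)).card ≤ t :=
    calc (univ.filter (fun z : K => z ^ t = z)).card
        ≤ (Polynomial.X ^ t - Polynomial.X : Polynomial K).roots.toFinset.card :=
          Finset.card_le_card hsub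
      _ ≤ Multiset.card (Polynomial.X ^ t - Polynomial.X : Polynomial K).roots :=
          Multiset.toFinset_card_le _
      _ ≤ t := le_trans (Polynomial.card_roots' _) (le_of_eq hdeg)
  have himage : (univ.image (algebraMap Ft K)) ⊆ univ.filter (fun z : K => z ^ t = z) := by
    intro y hy
    simp only [mem_image] at hy
    obtain ⟨w, _, rfl⟩ := hy
    simp only [mem_filter, mem_univ, true_and, ← map_pow]
    congr 1
    rw [← hct]
    exact FiniteField.pow_card w
  have hicard : (univ.image (algebraMap Ft K)).card = t := by
    rw [Finset.card_image_of_injective _ (algebraMap Ft K).injective, card_univ, hct]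
  exact (Finset.eq_of_subset_of_card_le himage (hcard.trans hicard.ge))

open Finset in
lemma StmtAux.fixed_mem_range {Ft K : Type} [Field Ft] [Field K] [Fintype Ft] [Fintype K]
    [Algebra Ft K] {t : ℕ} (hct : Fintype.card Ft = t) (hcK : Fintype.card K = t ^ 2)
    {z : K} (hz : z ^ t = z) : z ∈ Set.range (algebraMap Ft K) := by
  classical
  have h := StmtAux.fixed_finset_eq hct hcK (K := K)
  have hzS : z ∈ univ.filter (fun z : K => z ^ t = z) := by simp [hz]
  rw [← h, mem_image] at hzS
  obtain ⟨w, _, hw⟩ := hzS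
  exact ⟨w, hw⟩

open Finset in
lemma StmtAux.exists_nonfixed {Ft K : Type} [Field Ft] [Field K] [Fintype Ft] [Fintype K]
    [Algebra Ft K] {t : ℕ} (hct : Fintype.card Ft = t) (hcK : Fintype.card K = t ^ 2) :
    ∃ c : K, c ^ t ≠ c := by
  classical
  have ht : 1 < t := hct ▸ Fintype.one_lt_card
  by_contra h
  push_neg at h
  have : ∀ z : K, z ∈ univ.image (algebraMap Ft K) := by
    intro z
    rw [StmtAux.fixed_finset_eq hct hcK]
    simp [h z]
  have hle : Fintype.card K ≤ Fintype.card Ft := by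
    have := Finset.card_le_card (fun z _ => this z : (univ : Finset K) ⊆ univ.image (algebraMap Ft K))
    calc Fintype.card K = (univ : Finset K).card := card_univ.symm
      _ ≤ (univ.image (algebraMap Ft K)).card := this
      _ ≤ (univ : Finset Ft).card := Finset.card_image_le
      _ = Fintype.card Ft := card_univ
  rw [hct, hcK] at hle
  nlinarith

open Finset in
lemma StmtAux.pow_fixed {K : Type} [Field K] [Fintype K] {t : ℕ}
    (hcK : Fintype.card K = t ^ 2) (c : K) : (c ^ (t + 1)) ^ t = c ^ (t + 1) := by
  have hKfix : c ^ (t ^ 2) = c := by rw [← hcK]; exact FiniteField.pow_card c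
  rw [← pow_mul, show (t + 1) * t = t ^ 2 + t by ring, pow_add, hKfix, ← pow_succ']

open Finset in
lemma StmtAux.blocksum {Ft K : Type} [Field Ft] [Field K] [Fintype Ft] [Fintype K]
    [DecidableEq Ft] [Algebra Ft K] {t : ℕ} (hct : Fintype.card Ft = t)
    (hcK : Fintype.card K = t ^ 2)
    {C : Type} [Field C] (χ : AddChar Ft C) (hχ : χ ≠ 1)
    (g : K → Ft) (hg : ∀ z : K, z ^ t = z → algebraMap Ft K (g z) = z)
    (d : K) (hd : d ≠ 0) (hdt : d ^ t = d) :
    ∑ c : K, χ (g (c ^ (t + 1) * d)) = - (t : C) := by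
  classical
  have ht : 1 < t := hct ▸ Fintype.one_lt_card
  have ht0 : t ≠ 0 := by omega
  have hj : Function.Injective (algebraMap Ft K) := (algebraMap Ft K).injective
  have hfix : ∀ c : K, (c ^ (t + 1) * d) ^ t = c ^ (t + 1) * d := by
    intro c; rw [mul_pow, hdt, StmtAux.pow_fixed hcK]
  set ν : K → Ft := fun c => g (c ^ (t + 1) * d) with hν
  have hjν : ∀ c : K, algebraMap Ft K (ν c) = c ^ (t + 1) * d := fun c => hg _ (hfix c)
  -- membership characterization
  have hmem : ∀ (c : K) (w : Ft), ν c = w ↔ c ^ (t + 1) = algebraMap Ft K w * d⁻¹ := by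
    intro c w
    constructor
    · rintro rfl
      field_simp [hjν c]
      exact (hjν c).symm
    · intro h
      apply hj
      rw [hjν c, h]
      field_simp
  -- the fixed nonzero set R
  set R : Finset K := univ.filter (fun z : K => z ^ t = z ∧ z ≠ 0) with hR
  have hRerase : R = (univ.filter (fun z : K => z ^ t = z)).erase 0 := by
    ext z; simp [hR, and_comm]
  have hfixcard : (univ.filter (fun z : K => z ^ t = z)).card = t := by
    rw [← StmtAux.fixed_finset_eq hct hcK,
      Finset.card_image_of_injective _ hj, card_univ, hct]
  have hcardR : R.card = t - 1 := by
    rw [hRerase, Finset.card_erase_of_mem (by simp [zero_pow ht0]), hfixcard]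
  -- roots of unity
  set U : Finset K := univ.filter (fun c : K => c ^ (t + 1) = 1) with hU
  have hUle : U.card ≤ t + 1 := by
    have hsub : U ⊆ (Polynomial.nthRoots (t + 1) (1 : K)).toFinset := by
      intro c hc
      simp only [hU, mem_filter] at hc
      rw [Multiset.mem_toFinset, Polynomial.mem_nthRoots (by omega)]
      exact hc.2
    calc U.card ≤ (Polynomial.nthRoots (t + 1) (1 : K)).toFinset.card := Finset.card_le_card hsub
      _ ≤ Multiset.card (Polynomial.nthRoots (t + 1) (1 : K)) := Multiset.toFinset_card_le _
      _ ≤ t + 1 := Polynomial.card_nthRoots _ _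
  -- image of pow (t+1) on nonzero elements
  set Im : Finset K := (univ.filter (fun c : K => c ≠ 0)).image (fun c => c ^ (t + 1)) with hIm
  have hImR : Im ⊆ R := by
    intro y hy
    simp only [hIm, mem_image, mem_filter, mem_univ, true_and] at hy
    obtain ⟨c, hc, rfl⟩ := hy
    simp only [hR, mem_filter, mem_univ, true_and]
    exact ⟨StmtAux.pow_fixed hcK c, pow_ne_zero _ hc⟩
  -- fibers over elements of the image all have the same size
  have hfib : ∀ c₀ : K, c₀ ≠ 0 →
      (univ.filter (fun c : K => c ^ (t + 1) = c₀ ^ (t + 1))).card = U.card := by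
    intro c₀ hc₀
    apply Finset.card_bij' (fun x _ => x * c₀⁻¹) (fun x _ => x * c₀)
    · intro x hx
      simp only [mem_filter, mem_univ, true_and] at hx ⊢
      rw [hU, mem_filter]
      refine ⟨mem_univ _, ?_⟩
      rw [mul_pow, hx, inv_pow, mul_inv_cancel₀ (pow_ne_zero _ hc₀)]
    · intro x hx
      simp only [hU, mem_filter, mem_univ, true_and] at hx ⊢
      rw [mul_pow, hx, one_mul]
    · intro x _; field_simp
    · intro x _; field_simp
  -- counting: partition the nonzero elements by fibers
  have hpart : (univ.filter (fun c : K => c ≠ 0)).card = Im.card * U.card := by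
    rw [Finset.card_eq_sum_card_fiberwise
      (f := fun c : K => c ^ (t + 1)) (t := Im)
      (fun x hx => Finset.mem_image_of_mem _ hx)]
    rw [Finset.sum_congr rfl (fun y hy => ?_), Finset.sum_const, smul_eq_mul]
    simp only [hIm, mem_image, mem_filter, mem_univ, true_and] at hy
    obtain ⟨c₀, hc₀, rfl⟩ := hy
    rw [← hfib c₀ hc₀]
    congr 1
    ext c
    simp only [mem_filter, mem_univ, true_and, and_iff_right_iff_imp]
    intro hc hc0
    rw [hc0, zero_pow (show t + 1 ≠ 0 by omega)] at hc
    exact pow_ne_zero _ hc₀ hc.symm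
  have hcardnz : (univ.filter (fun c : K => c ≠ 0)).card = t ^ 2 - 1 := by
    rw [Finset.filter_ne', Finset.card_erase_of_mem (mem_univ 0), card_univ, hcK]
  have hImle : Im.card ≤ t - 1 := hcardR ▸ Finset.card_le_card hImR
  have hfact : (t - 1) * (t + 1) = t ^ 2 - 1 := by
    obtain ⟨n, rfl⟩ : ∃ n, t = n + 1 := ⟨t - 1, by omega⟩
    have h : (n + 1) ^ 2 = n * (n + 1 + 1) + 1 := by ring
    simp only [Nat.add_sub_cancel]
    omega
  have hprod : Im.card * U.card = (t - 1) * (t + 1) := by omega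
  have hU' : U.card = t + 1 := by
    by_contra hne
    have h1 : U.card ≤ t := by omega
    have h2 : Im.card * U.card ≤ (t - 1) * t := Nat.mul_le_mul hImle h1
    have h3 : (t - 1) * t < (t - 1) * (t + 1) :=
      (Nat.mul_lt_mul_left (by omega)).mpr (by omega)
    omega
  have hIm' : Im.card = t - 1 := by
    rw [hU'] at hprod
    exact Nat.eq_of_mul_eq_mul_right (by omega) hprod
  have hImeq : Im = R := Finset.eq_of_subset_of_card_le hImR (by omega)
  -- fiber cardinalities of ν
  have hcardfib : ∀ w : Ft, (univ.filter (fun c : K => ν c = w)).card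
      = if w = 0 then 1 else t + 1 := by
    intro w
    by_cases hw : w = 0
    · subst hw
      rw [if_pos rfl]
      have hset : (univ.filter (fun c : K => ν c = 0)) = {0} := by
        ext c
        simp only [mem_filter, mem_univ, true_and, mem_singleton, hmem c 0, map_zero, zero_mul]
        constructor
        · intro h
          exact pow_eq_zero_iff (n := t + 1) (by omega) |>.mp h
        · rintro rfl; rw [zero_pow (show t + 1 ≠ 0 by omega)]
      rw [hset, Finset.card_singleton]
    · rw [if_neg hw]
      set e : K := algebraMap Ft K w * d⁻¹ with he
      have he0 : e ≠ 0 := by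
        rw [he]
        apply mul_ne_zero
        · exact fun h => hw (hj (by rwa [map_zero]))
        · exact inv_ne_zero hd
      have heR : e ∈ R := by
        simp only [hR, mem_filter, mem_univ, true_and]
        refine ⟨?_, he0⟩
        rw [he, mul_pow, inv_pow, hdt, ← map_pow]
        congr 2
        rw [← hct]; exact FiniteField.pow_card w
      rw [← hImeq] at heR
      simp only [hIm, mem_image, mem_filter, mem_univ, true_and] at heR
      obtain ⟨c₀, hc₀, hc₀e⟩ := heR
      have : (univ.filter (fun c : K => ν c = w))
          = univ.filter (fun c : K => c ^ (t + 1) = c₀ ^ (t + 1)) := by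
        ext c
        simp only [mem_filter, mem_univ, true_and, hmem c w, ← he, hc₀e]
      rw [this, hfib c₀ hc₀, hU']
  -- final computation
  have hsplit : ∑ c : K, χ (ν c) = ∑ w : Ft, ∑ c ∈ univ.filter (fun c : K => ν c = w), χ (ν c) :=
    (Finset.sum_fiberwise univ ν (fun c => χ (ν c))).symm
  rw [hsplit]
  have : ∀ w : Ft, ∑ c ∈ univ.filter (fun c : K => ν c = w), χ (ν c)
      = ((if w = 0 then 1 else t + 1 : ℕ) : C) * χ w := by
    intro w
    rw [Finset.sum_congr rfl (fun c hc => by rw [(mem_filter.mp hc).2]), Finset.sum_const,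
      hcardfib w, nsmul_eq_mul]
  rw [Finset.sum_congr rfl (fun w _ => this w)]
  rw [← Finset.sum_erase_add _ _ (mem_univ (0 : Ft))]
  have h0 : ((if (0 : Ft) = 0 then 1 else t + 1 : ℕ) : C) * χ 0 = 1 := by
    simp [AddChar.map_zero_eq_one]
  rw [h0]
  have hrest : ∑ w ∈ univ.erase (0 : Ft), ((if w = 0 then 1 else t + 1 : ℕ) : C) * χ w
      = (t + 1 : C) * ∑ w ∈ univ.erase (0 : Ft), χ w := by
    rw [Finset.mul_sum]
    refine Finset.sum_congr rfl (fun w hw => ?_)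
    rw [if_neg (Finset.ne_of_mem_erase hw)]
    push_cast
    ring
  rw [hrest]
  have hsum0 : ∑ w ∈ univ.erase (0 : Ft), χ w = -1 := by
    have h1 : ∑ a : Ft, χ a = 0 := AddChar.sum_eq_zero_of_ne_one hχ
    have h2 := Finset.sum_erase_add univ (fun w => χ w) (mem_univ (0 : Ft))
    rw [h1] at h2
    simp only [AddChar.map_zero_eq_one] at h2
    linear_combination h2
  rw [hsum0]
  ring

namespace StmtAux

variable {K : Type} [Field K] {N : ℕ} {t : ℕ}

lemma herm_zero_left {H : (Fin N → K) → (Fin N → K) → K} (hH : IsSesquiHermitian t H)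
    (w : Fin N → K) : H 0 w = 0 := by
  have h := hH.1 0 0 w
  rw [add_zero] at h
  exact (left_eq_add.mp h)

lemma herm_zero_right {H : (Fin N → K) → (Fin N → K) → K} (hH : IsSesquiHermitian t H)
    (u : Fin N → K) : H u 0 = 0 := by
  have h := hH.2.1 u 0 0
  rw [add_zero] at h
  exact (left_eq_add.mp h)

def radical (t : ℕ) (H : (Fin N → K) → (Fin N → K) → K) (hH : IsSesquiHermitian t H) :
    Submodule K (Fin N → K) where
  carrier := {u | ∀ w, H u w = 0}
  add_mem' := by
    intro a b ha hb w
    rw [hH.1, ha w, hb w, add_zero]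
  zero_mem' := fun w => herm_zero_left hH w
  smul_mem' := by
    intro c u hu w
    rw [hH.2.2.1, hu w, mul_zero]

lemma mem_radical {H : (Fin N → K) → (Fin N → K) → K} {hH : IsSesquiHermitian t H}
    {u : Fin N → K} : u ∈ radical t H hH ↔ ∀ w, H u w = 0 := Iff.rfl

end StmtAux

open Finset Module in
lemma StmtAux.herm_sum_of_zero {Ft K : Type} [Field Ft] [Field K] [Fintype Ft] [Fintype K]
    [Algebra Ft K] {t : ℕ} (hct : Fintype.card Ft = t) (hcK : Fintype.card K = t ^ 2)
    {C : Type} [Field C] (χ : AddChar Ft C)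
    (g : K → Ft) (hg : ∀ z : K, z ^ t = z → algebraMap Ft K (g z) = z)
    {N : ℕ} (H : (Fin N → K) → (Fin N → K) → K) (hH : IsSesquiHermitian t H)
    (hz : ∀ u w, H u w = 0) :
    Module.finrank K (StmtAux.radical t H hH) ≤ N ∧
    ∑ v : Fin N → K, χ (g (H v v)) =
      (-1 : C) ^ (N - Module.finrank K (StmtAux.radical t H hH)) *
        (t : C) ^ (N + Module.finrank K (StmtAux.radical t H hH)) := by
  classical
  have ht : 1 < t := hct ▸ Fintype.one_lt_card
  have ht0 : t ≠ 0 := by omega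
  have hj : Function.Injective (algebraMap Ft K) := (algebraMap Ft K).injective
  have hg0 : g 0 = 0 := by
    apply hj
    rw [hg 0 (zero_pow ht0), map_zero]
  have hradtop : StmtAux.radical t H hH = ⊤ := by
    rw [eq_top_iff]
    exact fun u _ => fun w => hz u w
  have hrank : Module.finrank K (StmtAux.radical t H hH) = N := by
    rw [hradtop, finrank_top, Module.finrank_pi, Fintype.card_fin]
  rw [hrank]
  refine ⟨le_refl _, ?_⟩
  have : ∀ v : Fin N → K, χ (g (H v v)) = 1 := by
    intro v
    rw [hz v v, hg0, AddChar.map_zero_eq_one]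
  rw [Finset.sum_congr rfl (fun v _ => this v), Finset.sum_const, card_univ, Fintype.card_fun,
    hcK, Fintype.card_fin, nsmul_eq_mul, mul_one, Nat.sub_self, pow_zero, one_mul]
  push_cast
  rw [← pow_mul, two_mul]

open Finset Module in
lemma StmtAux.herm_sum {Ft K : Type} [Field Ft] [Field K] [Fintype Ft] [Fintype K]
    [DecidableEq Ft] [Algebra Ft K] {t : ℕ} (hct : Fintype.card Ft = t)
    (hcK : Fintype.card K = t ^ 2)
    (hfr : ∀ a b : K, (a + b) ^ t = a ^ t + b ^ t)
    {C : Type} [Field C] (χ : AddChar Ft C) (hχ : χ ≠ 1)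
    (g : K → Ft) (hg : ∀ z : K, z ^ t = z → algebraMap Ft K (g z) = z) :
    ∀ (N : ℕ) (H : (Fin N → K) → (Fin N → K) → K) (hH : IsSesquiHermitian t H),
      Module.finrank K (StmtAux.radical t H hH) ≤ N ∧
      ∑ v : Fin N → K, χ (g (H v v)) =
        (-1 : C) ^ (N - Module.finrank K (StmtAux.radical t H hH)) *
          (t : C) ^ (N + Module.finrank K (StmtAux.radical t H hH)) := by
  classical
  have ht : 1 < t := hct ▸ Fintype.one_lt_card
  have ht0 : t ≠ 0 := by omega
  have hj : Function.Injective (algebraMap Ft K) := (algebraMap Ft K).injective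
  have hgadd : ∀ A B : K, A ^ t = A → B ^ t = B → g (A + B) = g A + g B := by
    intro A B hA hB
    apply hj
    rw [map_add, hg A hA, hg B hB, hg (A + B) (by rw [hfr, hA, hB])]
  intro N
  induction N with
  | zero =>
    intro H hH
    apply StmtAux.herm_sum_of_zero hct hcK χ g hg
    intro u w
    have hu : u = 0 := funext fun i => i.elim0
    have hw : w = 0 := funext fun i => i.elim0
    rw [hu, hw]
    exact StmtAux.herm_zero_left hH 0
  | succ n ih =>
    intro H hH
    by_cases hz : ∀ u w, H u w = 0
    · exact StmtAux.herm_sum_of_zero hct hcK χ g hg H hH hz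
    push_neg at hz
    obtain ⟨u, w, huw⟩ := hz
    obtain ⟨c₀, hc₀⟩ := StmtAux.exists_nonfixed hct hcK
    -- there is a vector with nonzero "norm"
    have hdiag : ∃ v, H v v ≠ 0 := by
      by_contra hcon
      push_neg at hcon
      refine huw ?_
      have h1 : H u w + H w u = 0 := by
        have h := hcon (u + w)
        simp only [hH.1, hH.2.1, hcon u, hcon w, zero_add, add_zero] at h
        exact h
      have h2 : c₀ * H u w + c₀ ^ t * H w u = 0 := by
        have h := hcon (u + c₀ • w)
        simp only [hH.1, hH.2.1, hH.2.2.1, hH.2.2.2.1, hcon u, hcon w, zero_add, add_zero,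
          mul_zero] at h
        linear_combination h
      have h3 : (c₀ - c₀ ^ t) * H u w = 0 := by
        have hwu : H w u = - H u w := by linear_combination h1
        rw [hwu] at h2
        linear_combination h2
      rcases mul_eq_zero.mp h3 with h4 | h4
      · exact absurd (sub_eq_zero.mp h4).symm hc₀
      · exact h4
    obtain ⟨v, hv⟩ := hdiag
    have hdt : (H v v) ^ t = H v v := (hH.2.2.2.2 v v).symm
    -- the linear functional u' ↦ H v u'
    let φ : (Fin (n + 1) → K) →ₗ[K] K :=
      { toFun := fun u' => H v u'
        map_add' := fun x y => hH.2.1 v x y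
        map_smul' := fun c x => by simpa using hH.2.2.2.1 c v x }
    have hφv : φ v = H v v := rfl
    have hrange : LinearMap.range φ = ⊤ := by
      rw [LinearMap.range_eq_top]
      intro z
      refine ⟨(z / H v v) • v, ?_⟩
      rw [map_smul, hφv, smul_eq_mul, div_mul_cancel₀ _ hv]
    have hkerrank : finrank K (LinearMap.ker φ) = n := by
      have h := LinearMap.finrank_range_add_finrank_ker φ
      rw [hrange, finrank_top, Module.finrank_self, Module.finrank_pi, Fintype.card_fin] at h
      omega
    let b : Basis (Fin n) K (LinearMap.ker φ) := Module.finBasisOfFinrankEq K _ hkerrank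
    let Msub : (Fin n → K) →ₗ[K] (Fin (n + 1) → K) :=
      (LinearMap.ker φ).subtype ∘ₗ (b.equivFun.symm : (Fin n → K) ≃ₗ[K] _).toLinearMap
    have hMinj : Function.Injective Msub := by
      have : (Msub : (Fin n → K) → (Fin (n + 1) → K))
          = (LinearMap.ker φ).subtype ∘ b.equivFun.symm := rfl
      rw [this]
      exact (LinearMap.ker φ).injective_subtype.comp b.equivFun.symm.injective
    have hMker : ∀ y, φ (Msub y) = 0 := by
      intro y
      exact LinearMap.mem_ker.mp (SetLike.coe_mem (b.equivFun.symm y))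
    have hvM : ∀ y, H v (Msub y) = 0 := fun y => hMker y
    have hMv : ∀ y, H (Msub y) v = 0 := by
      intro y
      rw [hH.2.2.2.2, hvM y, zero_pow ht0]
    have hMrange : LinearMap.range Msub = LinearMap.ker φ := by
      rw [LinearMap.range_comp, LinearEquiv.range, Submodule.map_top, Submodule.range_subtype]
    -- bijection K × Kⁿ ≃ Kⁿ⁺¹
    set E : K × (Fin n → K) → (Fin (n + 1) → K) := fun cy => cy.1 • v + Msub cy.2 with hE
    have hEinj : Function.Injective E := by
      rintro ⟨c, y⟩ ⟨c', y'⟩ h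
      simp only [hE] at h
      have h1 := congrArg φ h
      simp only [map_add, map_smul, hMker, add_zero, smul_eq_mul, hφv] at h1
      have hcc : c = c' := mul_right_cancel₀ hv h1
      subst hcc
      have h2 : Msub y = Msub y' := by
        have := add_left_cancel h
        exact this
      exact Prod.ext rfl (hMinj h2)
    have hEbij : Function.Bijective E := by
      rw [Fintype.bijective_iff_injective_and_card]
      refine ⟨hEinj, ?_⟩
      simp only [Fintype.card_prod, Fintype.card_fun, Fintype.card_fin]
      rw [pow_succ]
      ring
    -- diagonal expansion
    have hdiagexp : ∀ (c : K) (y : Fin n → K),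
        H (c • v + Msub y) (c • v + Msub y)
          = c ^ (t + 1) * H v v + H (Msub y) (Msub y) := by
      intro c y
      simp only [hH.1, hH.2.1, hH.2.2.1, hH.2.2.2.1, hvM y, hMv y, mul_zero, add_zero, zero_add]
      rw [pow_succ]
      ring
    -- the restricted form
    set H' : (Fin n → K) → (Fin n → K) → K := fun y y' => H (Msub y) (Msub y') with hH'def
    have hH' : IsSesquiHermitian t H' := by
      refine ⟨?_, ?_, ?_, ?_, ?_⟩
      · intro x x' y; simp only [hH'def, map_add, hH.1]
      · intro x y y'; simp only [hH'def, map_add, hH.2.1]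
      · intro c x y; simp only [hH'def, map_smul, hH.2.2.1]
      · intro c x y; simp only [hH'def, map_smul, hH.2.2.2.1]
      · intro x y; exact hH.2.2.2.2 _ _
    obtain ⟨hr'le, hsum'⟩ := ih H' hH'
    -- radical correspondence
    have hradmap : Submodule.map Msub (StmtAux.radical t H' hH') = StmtAux.radical t H hH := by
      ext u'
      simp only [Submodule.mem_map]
      constructor
      · rintro ⟨y, hy, rfl⟩
        intro w'
        obtain ⟨⟨c, y'⟩, rfl⟩ := hEbij.2 w'
        have hy' := hy y'
        simp only [hE, hH.2.1, hH.2.2.2.1, hMv y, mul_zero, zero_add, add_zero]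
        exact hy'
      · intro hu
        have hker : u' ∈ LinearMap.ker φ := by
          rw [LinearMap.mem_ker]
          show H v u' = 0
          rw [hH.2.2.2.2, hu v, zero_pow ht0]
        rw [← hMrange] at hker
        obtain ⟨y, rfl⟩ := hker
        exact ⟨y, fun y' => hu (Msub y'), rfl⟩
    have hrr : finrank K (StmtAux.radical t H' hH') = finrank K (StmtAux.radical t H hH) := by
      rw [← hradmap]
      exact (Submodule.equivMapOfInjective Msub hMinj _).finrank_eq
    set r := finrank K (StmtAux.radical t H hH) with hr
    have hrn : r ≤ n := hrr ▸ hr'le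
    refine ⟨by omega, ?_⟩
    -- split the sum
    have hsum1 : ∑ v' : Fin (n + 1) → K, χ (g (H v' v'))
        = ∑ cy : K × (Fin n → K), χ (g (cy.1 ^ (t + 1) * H v v + H' cy.2 cy.2)) := by
      rw [← Fintype.sum_bijective E hEbij _ _ (fun cy => ?_)]
      rw [hE]
      simp only
      rw [hdiagexp cy.1 cy.2]
    have hfixA : ∀ c : K, (c ^ (t + 1) * H v v) ^ t = c ^ (t + 1) * H v v := by
      intro c; rw [mul_pow, hdt, StmtAux.pow_fixed hcK]
    have hfixB : ∀ y, (H' y y) ^ t = H' y y := fun y => (hH'.2.2.2.2 y y).symm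
    have hsum2 : ∑ cy : K × (Fin n → K), χ (g (cy.1 ^ (t + 1) * H v v + H' cy.2 cy.2))
        = (∑ c : K, χ (g (c ^ (t + 1) * H v v))) * (∑ y : Fin n → K, χ (g (H' y y))) := by
      rw [Finset.sum_mul_sum]
      rw [Fintype.sum_prod_type]
      refine Finset.sum_congr rfl (fun c _ => Finset.sum_congr rfl (fun y _ => ?_))
      rw [hgadd _ _ (hfixA c) (hfixB y), AddChar.map_add_eq_mul]
    rw [hsum1, hsum2, StmtAux.blocksum hct hcK χ hχ g hg (H v v) hv hdt, hsum', hrr]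
    have h1 : (n + 1) - r = (n - r) + 1 := by omega
    have h2 : (n + 1) + r = (n + r) + 1 := by omega
    rw [h1, h2, pow_succ, pow_succ]
    ring

namespace StmtAux

variable {Ft K : Type} [Field Ft] [Field K] [Fintype Ft] [Fintype K] [Algebra Ft K]

lemma iota_add {N : ℕ} (α : K) (x y : Fin (2 * N) → Ft) :
    iota N Ft K α (x + y) = iota N Ft K α x + iota N Ft K α y := by
  funext i
  simp only [iota, Pi.add_apply, map_add]
  ring

lemma iota_smul {N : ℕ} (α : K) (c : Ft) (x : Fin (2 * N) → Ft) :
    iota N Ft K α (c • x) = c • iota N Ft K α x := by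
  funext i
  simp only [iota, Pi.smul_apply, smul_eq_mul, map_mul, Pi.smul_apply, Algebra.smul_def, map_mul]
  ring

lemma pair_zero {α : K} (hα : α ∉ Set.range (algebraMap Ft K)) {a b : Ft}
    (h : algebraMap Ft K a + algebraMap Ft K b * α = 0) : a = 0 ∧ b = 0 := by
  by_cases hb : b = 0
  · subst hb
    rw [map_zero, zero_mul, add_zero] at h
    exact ⟨(algebraMap Ft K).injective (by rw [h, map_zero]), rfl⟩
  · exfalso
    apply hα
    have hbne : algebraMap Ft K b ≠ 0 := fun hc =>
      hb ((algebraMap Ft K).injective (by rw [hc, map_zero]))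
    refine ⟨-a / b, ?_⟩
    rw [map_div₀, map_neg, div_eq_iff hbne]
    linear_combination -h
end StmtAux

open StmtAux in
lemma StmtAux.iota_bijective {Ft K : Type} [Field Ft] [Field K] [Fintype Ft] [Fintype K]
    [Algebra Ft K] {t : ℕ} (hct : Fintype.card Ft = t) (hcK : Fintype.card K = t ^ 2)
    {N : ℕ} {α : K} (hα : α ∉ Set.range (algebraMap Ft K)) :
    Function.Bijective (iota N Ft K α) := by
  have ht : 1 < t := hct ▸ Fintype.one_lt_card
  rw [Fintype.bijective_iff_injective_and_card]
  constructor
  · intro x y hxy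
    have hsub : iota N Ft K α (x - y) = 0 := by
      have hxy' : ∀ i, iota N Ft K α x i = iota N Ft K α y i := fun i => congrFun hxy i
      funext i
      have := hxy' i
      simp only [iota, Pi.sub_apply, map_sub, Pi.zero_apply] at this ⊢
      linear_combination this
    have hcomp : ∀ i : Fin N,
        (x - y) ⟨2 * i.1, by have := i.isLt; omega⟩ = 0 ∧
        (x - y) ⟨2 * i.1 + 1, by have := i.isLt; omega⟩ = 0 := by
      intro i
      have := congrFun hsub i
      simp only [iota, Pi.zero_apply] at this
      exact pair_zero hα this
    have hxy0 : x - y = 0 := by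
      funext k
      rcases Nat.even_or_odd k.1 with ⟨i, hi⟩ | ⟨i, hi⟩
      · have hiN : i < N := by have := k.isLt; omega
        have h := (hcomp ⟨i, hiN⟩).1
        have hk : k = ⟨2 * i, by omega⟩ := Fin.ext (by simp; omega)
        rw [hk]
        exact h
      · have hiN : i < N := by have := k.isLt; omega
        have h := (hcomp ⟨i, hiN⟩).2
        have hk : k = ⟨2 * i + 1, by omega⟩ := Fin.ext (by simp; omega)
        rw [hk]
        exact h
    have := sub_eq_zero.mp hxy0
    exact this
  · rw [Fintype.card_fun, Fintype.card_fun, hct, hcK, Fintype.card_fin, Fintype.card_fin,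
      ← pow_mul, two_mul]

/-- The number `M` of solutions of `Tr_{F_t/F_s}(f(x)) = a` in `F_t^{2N}`, for a
quadratic hermitian form `f` of rank `2ρ`: `M = (t^{2N} − (−1)^ρ t^{2N−ρ})/s` if
`a ≠ 0`, and `M = (t^{2N} + (−1)^ρ (s−1) t^{2N−ρ})/s` if `a = 0`. -/
theorem stmt_18 (p s t N ρ : ℕ) [Fact p.Prime] (hpodd : p ≠ 2)
    (hN : 1 ≤ N) (hρ1 : 1 ≤ ρ) (hρN : ρ ≤ N)
    (Fs Ft K : Type) [Field Fs] [Field Ft] [Field K]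
    [Fintype Fs] [Fintype Ft] [Fintype K] [DecidableEq Fs] [DecidableEq Ft]
    [Algebra (ZMod p) Fs] [Algebra (ZMod p) Ft] [Algebra Fs Ft] [Algebra Ft K]
    [IsScalarTower (ZMod p) Fs Ft]
    (hcs : Fintype.card Fs = s) (hct : Fintype.card Ft = t)
    (hcK : Fintype.card K = t ^ 2)
    (H : (Fin N → K) → (Fin N → K) → K) (hH : IsSesquiHermitian t H)
    (α : K) (hα : Algebra.adjoin Ft ({α} : Set K) = ⊤)
    (f : (Fin (2 * N) → Ft) → Ft)
    (hf : ∀ x, algebraMap Ft K (f x) = H (iota N Ft K α x) (iota N Ft K α x))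
    (B : (Fin (2 * N) → Ft) → (Fin (2 * N) → Ft) → Ft)
    (hB : ∀ x y, B x y = f (x + y) - f x - f y)
    (W : Submodule Ft (Fin (2 * N) → Ft)) (hW : ∀ x, x ∈ W ↔ ∀ y, B x y = 0)
    (hrk : 2 * N - Module.finrank Ft W = 2 * ρ)
    (a : Fs) :
    (a ≠ 0 →
      (Nat.card {x : Fin (2 * N) → Ft // Algebra.trace Fs Ft (f x) = a} : ℚ) =
        ((t : ℚ) ^ (2 * N) - (-1 : ℚ) ^ ρ * (t : ℚ) ^ (2 * N - ρ)) / s) ∧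
    (a = 0 →
      (Nat.card {x : Fin (2 * N) → Ft // Algebra.trace Fs Ft (f x) = a} : ℚ) =
        ((t : ℚ) ^ (2 * N) + (-1 : ℚ) ^ ρ * ((s : ℚ) - 1) * (t : ℚ) ^ (2 * N - ρ)) / s) := by
  classical
  have hppr : p.Prime := Fact.out
  have ht2 : 1 < t := hct ▸ Fintype.one_lt_card
  have ht0 : t ≠ 0 := by omega
  have hs1 : 0 < s := hcs ▸ Fintype.card_pos
  haveI : CharP Ft p := charP_of_injective_algebraMap (algebraMap (ZMod p) Ft).injective p
  haveI : CharP K p := charP_of_injective_ringHom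
    ((algebraMap Ft K).comp (algebraMap (ZMod p) Ft)).injective p
  obtain ⟨m, -, htm⟩ := FiniteField.card Ft p
  have htm' : t = p ^ (m : ℕ) := hct ▸ htm
  have hfr : ∀ a b : K, (a + b) ^ t = a ^ t + b ^ t := by
    intro a b; rw [htm']; exact add_pow_char_pow ..
  have hj : Function.Injective (algebraMap Ft K) := (algebraMap Ft K).injective
  -- the partial inverse of the algebra map
  set g : K → Ft := Function.invFun (algebraMap Ft K) with hgdef
  have hgj : ∀ w : Ft, g (algebraMap Ft K w) = w := fun w => Function.leftInverse_invFun hj w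
  have hg : ∀ z : K, z ^ t = z → algebraMap Ft K (g z) = z := by
    intro z hz
    obtain ⟨w, rfl⟩ := StmtAux.fixed_mem_range hct hcK hz
    rw [hgj]
  -- α is not in the base field
  have hαnr : α ∉ Set.range (algebraMap Ft K) := by
    rintro ⟨c, hc⟩
    have hle : Algebra.adjoin Ft ({α} : Set K) ≤ ⊥ := by
      rw [Algebra.adjoin_le_iff]
      intro z hz
      rw [Set.mem_singleton_iff] at hz
      subst hz
      exact Algebra.mem_bot.mpr ⟨c, hc⟩
    rw [hα] at hle
    have hsurj : Function.Surjective (algebraMap Ft K) := by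
      intro z
      exact Algebra.mem_bot.mp (hle (by trivial))
    have hcard := Fintype.card_le_of_surjective _ hsurj
    rw [hct, hcK] at hcard
    nlinarith
  have hιbij := StmtAux.iota_bijective hct hcK (N := N) hαnr
  obtain ⟨c₀, hc₀⟩ := StmtAux.exists_nonfixed hct hcK (Ft := Ft) (K := K)
  -- B in terms of H
  have hBj : ∀ x y, algebraMap Ft K (B x y)
      = H (iota N Ft K α x) (iota N Ft K α y) + H (iota N Ft K α y) (iota N Ft K α x) := by
    intro x y
    rw [hB, map_sub, map_sub, hf, hf, hf, StmtAux.iota_add]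
    simp only [hH.1, hH.2.1]
    ring
  -- W corresponds to the radical
  have hWrad : ∀ x, x ∈ W ↔ iota N Ft K α x ∈ StmtAux.radical t H hH := by
    intro x
    rw [hW, StmtAux.mem_radical]
    constructor
    · intro h
      have h0 : ∀ w, H (iota N Ft K α x) w + H w (iota N Ft K α x) = 0 := by
        intro w
        obtain ⟨y, rfl⟩ := hιbij.2 w
        have h1 := hBj x y
        rw [h y, map_zero] at h1
        exact h1.symm
      intro w
      have h1 := h0 w
      have h2 := h0 (c₀ • w)
      rw [hH.2.2.2.1, hH.2.2.1] at h2
      have hwx : H w (iota N Ft K α x) = - H (iota N Ft K α x) w := by linear_combination h1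
      rw [hwx] at h2
      have h3 : (c₀ - c₀ ^ t) * H (iota N Ft K α x) w = 0 := by linear_combination h2
      rcases mul_eq_zero.mp h3 with h4 | h4
      · exact absurd (sub_eq_zero.mp h4).symm hc₀
      · exact h4
    · intro h y
      apply hj
      rw [map_zero, hBj x y, h (iota N Ft K α y)]
      have h2 : H (iota N Ft K α y) (iota N Ft K α x) = 0 := by
        rw [hH.2.2.2.2, h (iota N Ft K α y), zero_pow ht0]
      rw [h2, add_zero]
  -- rank bookkeeping
  let ιlin : (Fin (2 * N) → Ft) →ₗ[Ft] (Fin N → K) :=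
    { toFun := iota N Ft K α
      map_add' := StmtAux.iota_add α
      map_smul' := fun c x => by simpa using StmtAux.iota_smul α c x }
  have hWrk : Module.finrank Ft W = 2 * Module.finrank K (StmtAux.radical t H hH) := by
    have hWeq : W = Submodule.comap ιlin ((StmtAux.radical t H hH).restrictScalars Ft) := by
      ext x
      rw [Submodule.mem_comap]
      exact hWrad x
    let e : (Fin (2 * N) → Ft) ≃ₗ[Ft] (Fin N → K) := LinearEquiv.ofBijective ιlin hιbij
    have hmap : Submodule.map (e : (Fin (2 * N) → Ft) →ₗ[Ft] (Fin N → K)) W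
        = (StmtAux.radical t H hH).restrictScalars Ft := by
      rw [hWeq]
      exact Submodule.map_comap_eq_of_surjective e.surjective _
    have h1 : Module.finrank Ft W
        = Module.finrank Ft ((StmtAux.radical t H hH).restrictScalars Ft) := by
      rw [← hmap]
      exact (e.submoduleMap W).finrank_eq
    let e2 : ((StmtAux.radical t H hH).restrictScalars Ft) ≃ₗ[Ft] (StmtAux.radical t H hH) :=
      { toFun := fun x => ⟨x.1, x.2⟩, invFun := fun x => ⟨x.1, x.2⟩,
        map_add' := fun _ _ => rfl, map_smul' := fun _ _ => rfl,
        left_inv := fun _ => rfl, right_inv := fun _ => rfl }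
    have h2 : Module.finrank Ft ((StmtAux.radical t H hH).restrictScalars Ft)
        = Module.finrank Ft (StmtAux.radical t H hH) := e2.finrank_eq
    have h3 : Module.finrank Ft K * Module.finrank K (StmtAux.radical t H hH)
        = Module.finrank Ft (StmtAux.radical t H hH) :=
      Module.finrank_mul_finrank Ft K (StmtAux.radical t H hH)
    have hFtK : Module.finrank Ft K = 2 := by
      have hc : Fintype.card K = Fintype.card Ft ^ Module.finrank Ft K := Module.card_eq_pow_finrank
      rw [hct, hcK] at hc
      exact (Nat.pow_right_injective ht2 hc.symm)
    rw [hFtK] at h3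
    omega
  have hrle : Module.finrank K (StmtAux.radical t H hH) ≤ N := by
    have h1 := Submodule.finrank_le (StmtAux.radical t H hH)
    rwa [Module.finrank_pi, Fintype.card_fin] at h1
  have hrval1 : N - Module.finrank K (StmtAux.radical t H hH) = ρ := by
    rw [hWrk] at hrk; omega
  have hrval2 : N + Module.finrank K (StmtAux.radical t H hH) = 2 * N - ρ := by
    rw [hWrk] at hrk; omega
  -- character setup
  have hchar0 : ringChar ℚ ≠ ringChar Fs := by
    haveI : CharP Fs p := charP_of_injective_algebraMap (algebraMap (ZMod p) Fs).injective p
    have h1 : ringChar Fs = p := by rw [ringChar.eq_iff]; assumption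
    rw [ringChar.eq_zero, h1]
    exact fun h => hppr.ne_zero h.symm
  set Φ := AddChar.FiniteField.primitiveChar Fs ℚ hchar0 with hΦ
  set CC := CyclotomicField Φ.n ℚ with hCC
  set ψ : AddChar Fs CC := Φ.char with hψ
  have hψprim : ψ.IsPrimitive := Φ.prim
  haveI : CharZero CC := charZero_of_injective_algebraMap (algebraMap ℚ CC).injective
  have htr : Function.Surjective (Algebra.trace Fs Ft) := Algebra.trace_surjective Fs Ft
  -- the sums S_b for b ≠ 0
  have hSb : ∀ b : Fs, b ≠ 0 →
      ∑ x : Fin (2 * N) → Ft, ψ (Algebra.trace Fs Ft (f x) * b)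
        = (-1 : CC) ^ ρ * (t : CC) ^ (2 * N - ρ) := by
    intro b hb
    set χb : AddChar Ft CC :=
      (ψ.mulShift b).compAddMonoidHom (Algebra.trace Fs Ft).toAddMonoidHom with hχbdef
    have hχbapp : ∀ c : Ft, χb c = ψ (b * Algebra.trace Fs Ft c) := fun c => rfl
    have hχb : χb ≠ 1 := by
      rw [AddChar.ne_one_iff]
      obtain ⟨u, hu⟩ := AddChar.ne_one_iff.mp (hψprim hb)
      obtain ⟨c, hc⟩ := htr u
      refine ⟨c, ?_⟩
      rw [hχbapp, hc]
      rw [AddChar.mulShift_apply] at hu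
      exact hu
    have key := (StmtAux.herm_sum hct hcK hfr χb hχb g hg N H hH).2
    have h1 : ∀ x, ψ (Algebra.trace Fs Ft (f x) * b)
        = χb (g (H (iota N Ft K α x) (iota N Ft K α x))) := by
      intro x
      rw [← hf x, hgj (f x), hχbapp, mul_comm]
    rw [Finset.sum_congr rfl (fun x _ => h1 x),
      Fintype.sum_bijective (iota N Ft K α) hιbij _ (fun v => χb (g (H v v))) (fun x => rfl),
      key, hrval1, hrval2]
  -- the counting set
  set T := Finset.univ.filter (fun x : Fin (2 * N) → Ft => Algebra.trace Fs Ft (f x) = a) with hT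
  have hcardT : (Nat.card {x : Fin (2 * N) → Ft // Algebra.trace Fs Ft (f x) = a}) = T.card := by
    rw [Nat.card_eq_fintype_card, Fintype.card_subtype]
  have hmain : (T.card : CC) * s
      = (t : CC) ^ (2 * N)
        + (-1 : CC) ^ ρ * (t : CC) ^ (2 * N - ρ) * ((if a = 0 then (s : CC) else 0) - 1) := by
    have hx : ∀ x : Fin (2 * N) → Ft, ∑ b : Fs, ψ ((Algebra.trace Fs Ft (f x) - a) * b)
        = if Algebra.trace Fs Ft (f x) = a then (s : CC) else 0 := by
      intro x
      have h1 := AddChar.sum_mulShift (Algebra.trace Fs Ft (f x) - a) hψprim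
      rw [Finset.sum_congr rfl (fun y _ => by rw [mul_comm])] at h1
      rw [h1, hcs]
      by_cases hh : Algebra.trace Fs Ft (f x) = a
      · rw [if_pos (by rw [hh, sub_self]), if_pos hh]
      · rw [if_neg (fun hc => hh (sub_eq_zero.mp hc)), if_neg hh]
        simp
    have hleft : ∑ x : Fin (2 * N) → Ft, ∑ b : Fs, ψ ((Algebra.trace Fs Ft (f x) - a) * b)
        = (T.card : CC) * s := by
      rw [Finset.sum_congr rfl (fun x _ => hx x), ← Finset.sum_filter, Finset.sum_const,
        nsmul_eq_mul]
    have hright : ∑ x : Fin (2 * N) → Ft, ∑ b : Fs, ψ ((Algebra.trace Fs Ft (f x) - a) * b)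
        = ∑ b : Fs, (∑ x : Fin (2 * N) → Ft, ψ (Algebra.trace Fs Ft (f x) * b)) * ψ (-(a * b)) := by
      rw [Finset.sum_comm]
      refine Finset.sum_congr rfl (fun b _ => ?_)
      rw [Finset.sum_mul]
      refine Finset.sum_congr rfl (fun x _ => ?_)
      rw [← AddChar.map_add_eq_mul]
      congr 1
      ring
    rw [← hleft, hright]
    rw [← Finset.sum_erase_add _ _ (Finset.mem_univ (0 : Fs))]
    have hzero : (∑ x : Fin (2 * N) → Ft, ψ (Algebra.trace Fs Ft (f x) * 0)) * ψ (-(a * 0))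
        = (t : CC) ^ (2 * N) := by
      simp only [mul_zero, AddChar.map_zero_eq_one, neg_zero, mul_one]
      rw [Finset.sum_const, Finset.card_univ, Fintype.card_fun, hct, Fintype.card_fin,
        nsmul_eq_mul, mul_one]
      push_cast
      ring
    rw [hzero]
    have hrest : ∑ b ∈ Finset.univ.erase (0 : Fs),
        (∑ x : Fin (2 * N) → Ft, ψ (Algebra.trace Fs Ft (f x) * b)) * ψ (-(a * b))
        = (-1 : CC) ^ ρ * (t : CC) ^ (2 * N - ρ) *
          ∑ b ∈ Finset.univ.erase (0 : Fs), ψ (-(a * b)) := by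
      rw [Finset.mul_sum]
      refine Finset.sum_congr rfl (fun b hb => ?_)
      rw [hSb b (Finset.ne_of_mem_erase hb)]
    rw [hrest]
    have hpsisum : ∑ b ∈ Finset.univ.erase (0 : Fs), ψ (-(a * b))
        = (if a = 0 then (s : CC) else 0) - 1 := by
      have h2 := Finset.sum_erase_add Finset.univ (fun b : Fs => ψ (-(a * b))) (Finset.mem_univ 0)
      have h3 : ∑ b : Fs, ψ (-(a * b)) = if a = 0 then (s : CC) else 0 := by
        have h4 := AddChar.sum_mulShift (-a) hψprim
        rw [Finset.sum_congr rfl (fun y _ => by rw [show y * (-a) = -(a * y) by ring])] at h4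
        rw [h4, hcs]
        by_cases ha0 : a = 0
        · simp [ha0]
        · simp [ha0, neg_eq_zero]
      rw [h3] at h2
      simp only [mul_zero, neg_zero, AddChar.map_zero_eq_one] at h2
      linear_combination h2
    rw [hpsisum]
    ring
  -- conclude
  have hs0 : (s : ℚ) ≠ 0 := Nat.cast_ne_zero.mpr (by omega)
  have hinj : Function.Injective (Rat.cast (K := CC)) := Rat.cast_injective
  constructor
  · intro ha
    rw [hcardT, eq_div_iff hs0]
    apply hinj
    push_cast
    rw [if_neg ha] at hmain
    linear_combination hmain
  · intro ha
    rw [hcardT, eq_div_iff hs0]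
    apply hinj
    push_cast
    rw [if_pos ha] at hmain
    linear_combination hmain
end
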